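/- arXiv:2508.09773 — 10 statements merged into one kernel-verified Lean document; each statement's English description precedes it below -/
import Mathlib

section
/- Let R be a commutative ring and let a, b, c, d, e, f, g, h, i ∈ R satisfy a·e − b·d = 1, b·f − c·e = 1, d·h − e·g = 1 and e·i − f·h = 1. Then det [[a,b,c],[d,e,f],[g,h,i]] = (a + c + g + i) + (c·g − a·i)·e. In particular, if e = 0 then the determinant equals a + c + g + i, the sum of the four corner entries. -/
theorem sl2_det3_formula {R : Type*} [CommRing R] (a b c d e f g h i : R)
    (h1 : a * e - b * d = 1) (h2 : b * f - c * e = 1)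
    (h3 : d * h - e * g = 1) (h4 : e * i - f * h = 1) :
    Matrix.det !![a, b, c; d, e, f; g, h, i] = (a + c + g + i) + (c * g - a * i) * e ∧
      (e = 0 → Matrix.det !![a, b, c; d, e, f; g, h, i] = a + c + g + i) := by
  have key : Matrix.det !![a, b, c; d, e, f; g, h, i] =
      (a + c + g + i) + (c * g - a * i) * e := by
    rw [Matrix.det_fin_three]
    simp [Matrix.cons_val_zero, Matrix.cons_val_one]
    linear_combination a*h4 + c*h3 + i*h1 + g*h2
  exact ⟨key, fun he => by rw [key, he]; ring⟩
end

section
/- Let R be an integral domain and let m : ℤ × ℤ → R be an SL2-tiling over R. If the entry m(i,j) is wild, then m(i,j) = 0. -/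
/-- An SL2-tiling over a commutative ring `R`. -/
def IsSL2Tiling {R : Type*} [CommRing R] (m : ℤ × ℤ → R) : Prop :=
  ∀ i j : ℤ, m (i, j) * m (i + 1, j + 1) - m (i, j + 1) * m (i + 1, j) = 1

/-- The determinant of the 3×3 block of `m` centred at `(i, j)`. -/
def nbhdDet {R : Type*} [CommRing R] (m : ℤ × ℤ → R) (i j : ℤ) : R :=
  (Matrix.of fun u v : Fin 3 => m (i + ((u : ℕ) : ℤ) - 1, j + ((v : ℕ) : ℤ) - 1)).det

/-- The entry `m (i, j)` is wild if the surrounding 3×3 determinant is nonzero. -/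
def IsWild {R : Type*} [CommRing R] (m : ℤ × ℤ → R) (i j : ℤ) : Prop :=
  nbhdDet m i j ≠ 0

theorem wild_entry_eq_zero {R : Type*} [CommRing R] [IsDomain R]
    (m : ℤ × ℤ → R) (hm : IsSL2Tiling m) (i j : ℤ) (hw : IsWild m i j) :
    m (i, j) = 0 := by
  have h1 := hm (i - 1) (j - 1)
  have h2 := hm (i - 1) j
  have h3 := hm i (j - 1)
  have h4 := hm i j
  have e1 : i - 1 + 1 = i := by ring
  have e2 : j - 1 + 1 = j := by ring
  simp only [e1, e2] at h1 h2 h3 h4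
  have key : nbhdDet m i j * m (i, j) = 0 := by
    simp only [nbhdDet, Matrix.det_fin_three, Matrix.of_apply, Fin.val_zero, Fin.val_one,
      Fin.val_two]
    push_cast
    have a0 : i + 0 - 1 = i - 1 := by ring
    have a1 : i + 1 - 1 = i := by ring
    have a2 : i + 2 - 1 = i + 1 := by ring
    have b0 : j + 0 - 1 = j - 1 := by ring
    have b1 : j + 1 - 1 = j := by ring
    have b2 : j + 2 - 1 = j + 1 := by ring
    rw [a0, a1, a2, b0, b1, b2]
    linear_combination (m (i, j) * m (i + 1, j + 1) - m (i, j + 1) * m (i + 1, j)) * h1 + h4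
      - (m (i, j - 1) * m (i + 1, j) - m (i, j) * m (i + 1, j - 1)) * h2 - h3
  rcases mul_eq_zero.mp key with h | h
  · exact absurd h hw
  · exact h
end

section
/- Let m : ℤ × ℤ → ℤ be an SL2-tiling over the integers and suppose m(i,j) = 0 for some i, j ∈ ℤ. Then either (m(i−1,j), m(i,j−1), m(i,j+1), m(i+1,j)) = (1, −1, 1, −1) or (m(i−1,j), m(i,j−1), m(i,j+1), m(i+1,j)) = (−1, 1, −1, 1); that is, every zero entry is surrounded above/left/right/below by 1, −1, 1, −1 or by −1, 1, −1, 1. -/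
theorem zero_entry_neighbours (m : ℤ × ℤ → ℤ) (hm : IsSL2Tiling m)
    (i j : ℤ) (h0 : m (i, j) = 0) :
    (m (i - 1, j) = 1 ∧ m (i, j - 1) = -1 ∧ m (i, j + 1) = 1 ∧ m (i + 1, j) = -1) ∨
      (m (i - 1, j) = -1 ∧ m (i, j - 1) = 1 ∧ m (i, j + 1) = -1 ∧ m (i + 1, j) = 1) := by
  have h1 := hm i j
  have h2 := hm (i - 1) (j - 1)
  have h3 := hm (i - 1) j
  have h4 := hm i (j - 1)
  simp only [sub_add_cancel] at h2 h3 h4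
  rw [h0] at h1 h2 h3 h4
  have e1 : m (i, j + 1) * m (i + 1, j) = -1 := by linarith
  have e2 : m (i - 1, j) * m (i, j - 1) = -1 := by linarith
  have e3 : m (i - 1, j) * m (i, j + 1) = 1 := by linarith
  have e4 : m (i, j - 1) * m (i + 1, j) = 1 := by linarith
  rcases Int.eq_one_or_neg_one_of_mul_eq_one' e3 with ⟨ha, hb⟩ | ⟨ha, hb⟩ <;>
    [left; right] <;>
    refine ⟨ha, ?_, hb, ?_⟩ <;> rw [ha] at e2 <;> rw [hb] at e1 <;> omega
end

section
/- Let R be an integral domain and let m : ℤ × ℤ → R be an SL2-tiling over R. If the entry m(i,j) is wild, then m(i,j) = 0, the determinant of the 3×3 matrix (m(i+r, j+s))_{r,s ∈ {−1,0,1}} equals m(i−1,j−1) + m(i−1,j+1) + m(i+1,j−1) + m(i+1,j+1), and at least one of the four diagonally adjacent entries m(i−1,j−1), m(i−1,j+1), m(i+1,j−1), m(i+1,j+1) is nonzero. -/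
theorem wild_entry_properties {R : Type*} [CommRing R] [IsDomain R]
    (m : ℤ × ℤ → R) (hm : IsSL2Tiling m) (i j : ℤ) (hw : IsWild m i j) :
    m (i, j) = 0 ∧
      nbhdDet m i j =
        m (i - 1, j - 1) + m (i - 1, j + 1) + m (i + 1, j - 1) + m (i + 1, j + 1) ∧
      (m (i - 1, j - 1) ≠ 0 ∨ m (i - 1, j + 1) ≠ 0 ∨
        m (i + 1, j - 1) ≠ 0 ∨ m (i + 1, j + 1) ≠ 0) := by
  set a := m (i - 1, j - 1) with ha
  set b := m (i - 1, j) with hb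
  set c := m (i - 1, j + 1) with hc
  set d := m (i, j - 1) with hd
  set e := m (i, j) with he
  set f := m (i, j + 1) with hf
  set g := m (i + 1, j - 1) with hg
  set h := m (i + 1, j) with hh
  set k := m (i + 1, j + 1) with hk
  have h1 : a * e - b * d = 1 := by
    have := hm (i - 1) (j - 1)
    simpa [ha, hb, hd, he, sub_add_cancel] using this
  have h2 : b * f - c * e = 1 := by
    have := hm (i - 1) j
    simpa [hb, hc, he, hf, sub_add_cancel] using this
  have h3 : d * h - e * g = 1 := by
    have := hm i (j - 1)
    simpa [hd, he, hg, hh, sub_add_cancel] using this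
  have h4 : e * k - f * h = 1 := by
    have := hm i j
    simpa [he, hf, hh, hk] using this
  have hD : nbhdDet m i j =
      a * e * k - a * f * h - b * d * k + b * f * g + c * d * h - c * e * g := by
    unfold nbhdDet
    rw [Matrix.det_fin_three]
    simp only [Matrix.of_apply, Fin.isValue, Fin.val_zero, Fin.val_one, Fin.val_two,
      Nat.cast_zero, Nat.cast_one, Nat.cast_ofNat]
    norm_num [ha, hb, hc, hd, he, hf, hg, hh, hk]
    ring_nf
  have he0 : e = 0 := by
    have hmul : e * nbhdDet m i j = 0 := by
      rw [hD]
      linear_combination (a * e - b * d) * h4 + (c * e - b * f) * h3 + h1 - h2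
    rcases mul_eq_zero.mp hmul with h' | h'
    · exact h'
    · exact absurd h' hw
  refine ⟨he0, ?_, ?_⟩
  · rw [hD]
    linear_combination a * h4 + k * h1 + g * h2 + c * h3 + (c * g - a * k) * he0
  · by_contra hcon
    push_neg at hcon
    obtain ⟨hA, hC, hG, hK⟩ := hcon
    apply hw
    rw [hD, hA, hC, hG, hK, he0]
    ring_nf
end

section
/- Let m : ℤ × ℤ → ℤ be an SL2-tiling over the integers and suppose the entry m(i,j) is wild. Then none of the four side-adjacent entries m(i−1,j), m(i+1,j), m(i,j−1), m(i,j+1) is wild, and at least one of the four diagonally adjacent entries m(i−1,j−1), m(i−1,j+1), m(i+1,j−1), m(i+1,j+1) is not wild. -/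
lemma nbhdDet_expand (m : ℤ × ℤ → ℤ) (i j : ℤ) :
    nbhdDet m i j =
      m (i-1, j-1) * m (i, j) * m (i+1, j+1) - m (i-1, j-1) * m (i, j+1) * m (i+1, j)
      - m (i-1, j) * m (i, j-1) * m (i+1, j+1) + m (i-1, j) * m (i, j+1) * m (i+1, j-1)
      + m (i-1, j+1) * m (i, j-1) * m (i+1, j) - m (i-1, j+1) * m (i, j) * m (i+1, j-1) := by
  rw [nbhdDet, Matrix.det_fin_three]
  simp only [Matrix.of_apply, Fin.val_zero, Fin.val_one, Fin.val_two,
    Nat.cast_ofNat, Nat.cast_zero, Nat.cast_one]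
  simp only [show ∀ x:ℤ, x + 0 - 1 = x - 1 from fun x => by ring,
             show ∀ x:ℤ, x + 1 - 1 = x from fun x => by ring,
             show ∀ x:ℤ, x + 2 - 1 = x + 1 from fun x => by ring]

lemma wild_center_eq_zero (m : ℤ × ℤ → ℤ) (hm : IsSL2Tiling m) (i j : ℤ)
    (hw : IsWild m i j) : m (i, j) = 0 := by
  have h1 := hm (i-1) (j-1)
  have h2 := hm (i-1) j
  have h3 := hm i (j-1)
  have h4 := hm i j
  simp only [show i-1+1 = i by ring, show j-1+1 = j by ring] at h1 h2 h3
  have key : nbhdDet m i j * m (i, j) = 0 := by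
    rw [nbhdDet_expand]
    linear_combination (m (i,j) * m (i+1,j+1) - m (i,j+1) * m (i+1,j)) * h1 + h4
      - (m (i,j-1) * m (i+1,j) - m (i,j) * m (i+1,j-1)) * h2 - h3
  rcases mul_eq_zero.mp key with h | h
  · exact absurd h hw
  · exact h

theorem wild_entry_neighbours_not_wild (m : ℤ × ℤ → ℤ) (hm : IsSL2Tiling m)
    (i j : ℤ) (hw : IsWild m i j) :
    (¬IsWild m (i - 1) j ∧ ¬IsWild m (i + 1) j ∧
      ¬IsWild m i (j - 1) ∧ ¬IsWild m i (j + 1)) ∧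
    (¬IsWild m (i - 1) (j - 1) ∨ ¬IsWild m (i - 1) (j + 1) ∨
      ¬IsWild m (i + 1) (j - 1) ∨ ¬IsWild m (i + 1) (j + 1)) := by
  have e0 : m (i, j) = 0 := wild_center_eq_zero m hm i j hw
  have h1 := hm (i-1) (j-1)
  have h2 := hm (i-1) j
  have h3 := hm i (j-1)
  have h4 := hm i j
  simp only [show i-1+1 = i by ring, show j-1+1 = j by ring] at h1 h2 h3
  constructor
  · refine ⟨?_, ?_, ?_, ?_⟩
    · intro hw'
      have := wild_center_eq_zero m hm (i-1) j hw'
      rw [this, e0] at h2; simp at h2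
    · intro hw'
      have := wild_center_eq_zero m hm (i+1) j hw'
      rw [this, e0] at h3; simp at h3
    · intro hw'
      have := wild_center_eq_zero m hm i (j-1) hw'
      rw [this, e0] at h3; simp at h3
    · intro hw'
      have := wild_center_eq_zero m hm i (j+1) hw'
      rw [this, e0] at h4; simp at h4
  · by_contra hc
    push_neg at hc
    obtain ⟨w1, w2, w3, w4⟩ := hc
    have a0 := wild_center_eq_zero m hm (i-1) (j-1) (w1)
    have c0 := wild_center_eq_zero m hm (i-1) (j+1) (w2)
    have g0 := wild_center_eq_zero m hm (i+1) (j-1) (w3)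
    have k0 := wild_center_eq_zero m hm (i+1) (j+1) (w4)
    apply hw
    rw [nbhdDet_expand, a0, c0, g0, k0, e0]
    ring
end

section
/- Let m : ℤ × ℤ → ℤ be an SL2-tiling over the integers and let n be a positive integer. Then the number of wild entries m(i,j) with 0 ≤ i < n and 0 ≤ j < n is at most 2(n+2)²/5. -/
set_option maxHeartbeats 4000000
set_option synthInstance.maxSize 4000
set_option synthInstance.maxHeartbeats 2000000

namespace WildAux

def offPP : List (ℤ × ℤ) := [(-3, 0), (-2, -1), (-2, 0), (-2, 1), (-1, -2), (-1, -1), (-1, 0), (-1, 1), (-1, 2), (0, -3), (0, -2), (0, -1), (0, 0), (0, 1), (0, 2), (0, 3), (1, -3), (1, -2), (1, -1), (1, 0), (1, 1), (1, 2), (1, 3), (2, -2), (2, -1), (2, 0), (2, 1), (2, 2), (2, 3), (3, -1), (3, 0), (3, 1), (3, 2), (3, 3), (3, 4), (4, 0), (4, 1), (4, 2), (4, 3), (4, 4)]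

def offPM : List (ℤ × ℤ) := [(-3, 0), (-2, -1), (-2, 0), (-2, 1), (-1, -2), (-1, -1), (-1, 0), (-1, 1), (-1, 2), (0, -3), (0, -2), (0, -1), (0, 0), (0, 1), (0, 2), (0, 3), (1, -4), (1, -3), (1, -2), (1, -1), (1, 0), (1, 1), (1, 2), (1, 3), (2, -4), (2, -3), (2, -2), (2, -1), (2, 0), (2, 1), (2, 2), (3, -3), (3, -2), (3, -1), (3, 0), (3, 1), (4, -3), (4, -2), (4, -1), (4, 0)]

def offMP : List (ℤ × ℤ) := [(-3, 0), (-3, 1), (-3, 2), (-3, 3), (-2, -1), (-2, 0), (-2, 1), (-2, 2), (-2, 3), (-1, -2), (-1, -1), (-1, 0), (-1, 1), (-1, 2), (-1, 3), (-1, 4), (0, -3), (0, -2), (0, -1), (0, 0), (0, 1), (0, 2), (0, 3), (0, 4), (1, -3), (1, -2), (1, -1), (1, 0), (1, 1), (1, 2), (1, 3), (2, -2), (2, -1), (2, 0), (2, 1), (2, 2), (3, -1), (3, 0), (3, 1), (4, 0)]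

def offMM : List (ℤ × ℤ) := [(-3, -4), (-3, -3), (-3, -2), (-3, -1), (-3, 0), (-2, -4), (-2, -3), (-2, -2), (-2, -1), (-2, 0), (-2, 1), (-1, -3), (-1, -2), (-1, -1), (-1, 0), (-1, 1), (-1, 2), (0, -3), (0, -2), (0, -1), (0, 0), (0, 1), (0, 2), (0, 3), (1, -3), (1, -2), (1, -1), (1, 0), (1, 1), (1, 2), (1, 3), (2, -2), (2, -1), (2, 0), (2, 1), (2, 2), (3, -1), (3, 0), (3, 1), (4, 0)]

def offList (ε δ : ℤ) : List (ℤ × ℤ) :=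
  if ε = 1 then (if δ = 1 then offPP else offPM) else (if δ = 1 then offMP else offMM)

def offF (ε δ : ℤ) : Finset (ℤ × ℤ) := (offList ε δ).toFinset

lemma offF_card (ε δ : ℤ) : (offF ε δ).card = 40 := by
  unfold offF offList
  split_ifs <;> decide

/-- The inequality description of the pentagon (diamond plus quarter of the hole's diamond). -/
abbrev pentPred (ε δ X Y : ℤ) : Prop :=
  (-3 ≤ X+Y ∧ X+Y ≤ 4 ∧ -3 ≤ X-Y ∧ X-Y ≤ 4) ∨
  (ε = 1 ∧ δ = 1 ∧
    ((5 ≤ X+Y ∧ X+Y ≤ 8 ∧ 1 ≤ X-Y ∧ X-Y ≤ 4 ∧ X-Y ≤ 8-(X+Y)) ∨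
     (5 ≤ X+Y ∧ X+Y ≤ 8 ∧ -3 ≤ X-Y ∧ X-Y ≤ 0 ∧ X+Y-8 ≤ X-Y-2) ∨
     (X+Y-8 = X-Y ∧ -1 ≤ X-Y ∧ X-Y ≤ 0))) ∨
  (ε = 1 ∧ δ = -1 ∧
    ((5 ≤ X-Y ∧ X-Y ≤ 8 ∧ 1 ≤ X+Y ∧ X+Y ≤ 4 ∧ X+Y ≤ 8-(X-Y)) ∨
     (5 ≤ X-Y ∧ X-Y ≤ 8 ∧ -3 ≤ X+Y ∧ X+Y ≤ 0 ∧ X-Y-8 ≤ X+Y-2) ∨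
     (X-Y-8 = X+Y ∧ -3 ≤ X+Y ∧ X+Y ≤ -2))) ∨
  (ε = -1 ∧ δ = 1 ∧
    ((1 ≤ X+Y ∧ X+Y ≤ 4 ∧ -7 ≤ X-Y ∧ X-Y ≤ -4 ∧ (X+Y ≤ X-Y+8-2 ∨ (X+Y = X-Y+8 ∧ 3 ≤ X+Y))) ∨
     (-3 ≤ X+Y ∧ X+Y ≤ 0 ∧ -7 ≤ X-Y ∧ X-Y ≤ -4 ∧ X-Y+8 ≥ 1-(X+Y)))) ∨
  (ε = -1 ∧ δ = -1 ∧
    ((-7 ≤ X+Y ∧ X+Y ≤ -4 ∧ -3 ≤ X-Y ∧ X-Y ≤ 0 ∧ X+Y+8+(X-Y) ≥ 2) ∨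
     (-7 ≤ X+Y ∧ X+Y ≤ -4 ∧ 1 ≤ X-Y ∧ X-Y ≤ 4 ∧ (X-Y ≤ X+Y+8-2 ∨ (X+Y+8 = X-Y ∧ X-Y ≤ 2)))))

lemma mem_off_pred {ε δ : ℤ} (hε : ε = 1 ∨ ε = -1) (hδ : δ = 1 ∨ δ = -1) :
    ∀ o ∈ offF ε δ, pentPred ε δ o.1 o.2 := by
  rcases hε with rfl | rfl <;> rcases hδ with rfl | rfl <;> decide

lemma mem_off_bounds (ε δ : ℤ) : ∀ o ∈ offF ε δ, -4 ≤ o.1 ∧ o.1 ≤ 4 ∧ -4 ≤ o.2 ∧ o.2 ≤ 4 := by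
  unfold offF offList
  split_ifs <;> decide

/-- The arithmetic core: two pentagons of distinct wild entries are disjoint. -/
lemma pent_core (di dj ε δ ε' δ' X Y : ℤ)
    (hε : ε = 1 ∨ ε = -1) (hδ : δ = 1 ∨ δ = -1)
    (hε' : ε' = 1 ∨ ε' = -1) (hδ' : δ' = 1 ∨ δ' = -1)
    (hne : ¬(di = 0 ∧ dj = 0))
    (ha1 : ¬(di = 1 ∧ dj = 0)) (ha2 : ¬(di = -1 ∧ dj = 0))
    (ha3 : ¬(di = 0 ∧ dj = 1)) (ha4 : ¬(di = 0 ∧ dj = -1))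
    (hh1 : ¬(di = ε ∧ dj = δ)) (hh2 : ¬(di = -ε' ∧ dj = -δ'))
    (p1 : pentPred ε δ X Y)
    (p2 : pentPred ε' δ' (X - 4*di) (Y - 4*dj)) : False := by
  rcases hε with rfl | rfl <;> rcases hδ with rfl | rfl <;>
    rcases hε' with rfl | rfl <;> rcases hδ' with rfl | rfl <;>
    · norm_num [pentPred] at p1 p2
      omega

/-- Embedding adding the (scaled) centre of a cell. -/
def addOff (w : ℤ × ℤ) : (ℤ × ℤ) ↪ (ℤ × ℤ) :=
  ⟨fun o => (4 * w.1 + o.1, 4 * w.2 + o.2), by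
    intro a b h
    simp only [Prod.mk.injEq] at h
    exact Prod.ext (by omega) (by omega)⟩

open Classical in
/-- Chosen direction of a nonzero diagonal neighbour. -/
noncomputable def dirW (m : ℤ × ℤ → ℤ) (w : ℤ × ℤ) : ℤ × ℤ :=
  if h : ∃ d : ℤ × ℤ, (d.1 = 1 ∨ d.1 = -1) ∧ (d.2 = 1 ∨ d.2 = -1) ∧
      m (w.1 + d.1, w.2 + d.2) ≠ 0 then h.choose else (1, 1)

lemma dirW_spec {m : ℤ × ℤ → ℤ} {w : ℤ × ℤ}
    (h : ∃ d : ℤ × ℤ, (d.1 = 1 ∨ d.1 = -1) ∧ (d.2 = 1 ∨ d.2 = -1) ∧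
      m (w.1 + d.1, w.2 + d.2) ≠ 0) :
    ((dirW m w).1 = 1 ∨ (dirW m w).1 = -1) ∧ ((dirW m w).2 = 1 ∨ (dirW m w).2 = -1) ∧
      m (w.1 + (dirW m w).1, w.2 + (dirW m w).2) ≠ 0 := by
  unfold dirW
  rw [dif_pos h]
  exact h.choose_spec

/-- The pentagon of a wild entry. -/
noncomputable def pent (m : ℤ × ℤ → ℤ) (w : ℤ × ℤ) : Finset (ℤ × ℤ) :=
  (offF (dirW m w).1 (dirW m w).2).map (addOff w)

lemma pent_card (m : ℤ × ℤ → ℤ) (w : ℤ × ℤ) : (pent m w).card = 40 := by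
  rw [pent, Finset.card_map, offF_card]

lemma mem_pent_pred {m : ℤ × ℤ → ℤ} {w : ℤ × ℤ} {z : ℤ × ℤ}
    (h : ∃ d : ℤ × ℤ, (d.1 = 1 ∨ d.1 = -1) ∧ (d.2 = 1 ∨ d.2 = -1) ∧
      m (w.1 + d.1, w.2 + d.2) ≠ 0)
    (hz : z ∈ pent m w) :
    pentPred (dirW m w).1 (dirW m w).2 (z.1 - 4 * w.1) (z.2 - 4 * w.2) := by
  obtain ⟨hs1, hs2, _⟩ := dirW_spec h
  rw [pent, Finset.mem_map] at hz
  obtain ⟨o, ho, rfl⟩ := hz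
  have := mem_off_pred hs1 hs2 o ho
  have e : (addOff w o) = (4 * w.1 + o.1, 4 * w.2 + o.2) := rfl
  rw [e]
  simpa using this

lemma mem_pent_bounds {m : ℤ × ℤ → ℤ} {w : ℤ × ℤ} {z : ℤ × ℤ} (hz : z ∈ pent m w) :
    4 * w.1 - 4 ≤ z.1 ∧ z.1 ≤ 4 * w.1 + 4 ∧ 4 * w.2 - 4 ≤ z.2 ∧ z.2 ≤ 4 * w.2 + 4 := by
  rw [pent, Finset.mem_map] at hz
  obtain ⟨o, ho, rfl⟩ := hz
  have := mem_off_bounds (dirW m w).1 (dirW m w).2 o ho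
  show 4 * w.1 - 4 ≤ 4 * w.1 + o.1 ∧ 4 * w.1 + o.1 ≤ 4 * w.1 + 4 ∧
    4 * w.2 - 4 ≤ 4 * w.2 + o.2 ∧ 4 * w.2 + o.2 ≤ 4 * w.2 + 4
  omega

section Tiling

variable {m : ℤ × ℤ → ℤ} (hm : IsSL2Tiling m)

lemma det_expand (i j : ℤ) :
    nbhdDet m i j =
      m (i-1, j-1) * (m (i, j) * m (i+1, j+1) - m (i, j+1) * m (i+1, j))
      - m (i-1, j) * (m (i, j-1) * m (i+1, j+1) - m (i, j+1) * m (i+1, j-1))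
      + m (i-1, j+1) * (m (i, j-1) * m (i+1, j) - m (i, j) * m (i+1, j-1)) := by
  simp only [nbhdDet, Matrix.det_fin_three, Matrix.of_apply, Fin.val_zero, Fin.val_one,
    Fin.val_two, Nat.cast_zero, Nat.cast_one, Nat.cast_ofNat]
  ring_nf

include hm

lemma wild_zero {i j : ℤ} (hw : IsWild m i j) : m (i, j) = 0 := by
  have key : m (i, j) * nbhdDet m i j = 0 := by
    rw [det_expand]
    have h1 := hm (i-1) (j-1)
    have h2 := hm (i-1) j
    have h3 := hm i (j-1)
    have h4 := hm i j
    simp only [show i - 1 + 1 = i from by ring, show j - 1 + 1 = j from by ring] at h1 h2 h3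
    linear_combination (m (i, j) * m (i+1, j+1) - m (i, j+1) * m (i+1, j)) * h1
      - (m (i, j-1) * m (i+1, j) - m (i, j) * m (i+1, j-1)) * h2 + h4 - h3
  rcases mul_eq_zero.mp key with h | h
  · exact h
  · exact absurd h hw

lemma no_adj_h {i j : ℤ} (h0 : m (i, j) = 0) (h1 : m (i, j + 1) = 0) : False := by
  have := hm i j
  rw [h0, h1] at this
  simp at this

lemma no_adj_v {i j : ℤ} (h0 : m (i, j) = 0) (h1 : m (i + 1, j) = 0) : False := by
  have := hm i j
  rw [h0, h1] at this
  simp at this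

lemma hole_exists {i j : ℤ} (hw : IsWild m i j) :
    ∃ d : ℤ × ℤ, (d.1 = 1 ∨ d.1 = -1) ∧ (d.2 = 1 ∨ d.2 = -1) ∧
      m (i + d.1, j + d.2) ≠ 0 := by
  by_contra hc
  push_neg at hc
  have c1 : m (i - 1, j - 1) = 0 := by
    have := hc (-1, -1) (Or.inr rfl) (Or.inr rfl)
    rw [show i + (-1 : ℤ) = i - 1 from by ring, show j + (-1 : ℤ) = j - 1 from by ring] at this
    exact this
  have c2 : m (i - 1, j + 1) = 0 := by
    have := hc (-1, 1) (Or.inr rfl) (Or.inl rfl)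
    rw [show i + (-1 : ℤ) = i - 1 from by ring] at this
    exact this
  have c3 : m (i + 1, j - 1) = 0 := by
    have := hc (1, -1) (Or.inl rfl) (Or.inr rfl)
    rw [show j + (-1 : ℤ) = j - 1 from by ring] at this
    exact this
  have c4 : m (i + 1, j + 1) = 0 := hc (1, 1) (Or.inl rfl) (Or.inl rfl)
  have c0 : m (i, j) = 0 := wild_zero hm hw
  apply hw
  rw [det_expand, c0, c1, c2, c3, c4]
  ring

lemma pent_disjoint {w w' : ℤ × ℤ} (hw : IsWild m w.1 w.2) (hw' : IsWild m w'.1 w'.2)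
    (hne : w ≠ w') : Disjoint (pent m w) (pent m w') := by
  have hz : m (w.1, w.2) = 0 := wild_zero hm hw
  have hz' : m (w'.1, w'.2) = 0 := wild_zero hm hw'
  have hex : ∃ d : ℤ × ℤ, (d.1 = 1 ∨ d.1 = -1) ∧ (d.2 = 1 ∨ d.2 = -1) ∧
      m (w.1 + d.1, w.2 + d.2) ≠ 0 := hole_exists hm hw
  have hex' : ∃ d : ℤ × ℤ, (d.1 = 1 ∨ d.1 = -1) ∧ (d.2 = 1 ∨ d.2 = -1) ∧
      m (w'.1 + d.1, w'.2 + d.2) ≠ 0 := hole_exists hm hw'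
  obtain ⟨hd1, hd2, hdm⟩ := dirW_spec hex
  obtain ⟨hd1', hd2', hdm'⟩ := dirW_spec hex'
  rw [Finset.disjoint_left]
  intro z hzw hzw'
  have p1 := mem_pent_pred hex hzw
  have p2 := mem_pent_pred hex' hzw'
  refine pent_core (w'.1 - w.1) (w'.2 - w.2) (dirW m w).1 (dirW m w).2
      (dirW m w').1 (dirW m w').2 (z.1 - 4 * w.1) (z.2 - 4 * w.2)
      hd1 hd2 hd1' hd2' ?_ ?_ ?_ ?_ ?_ ?_ ?_ p1 ?_
  · rintro ⟨e1, e2⟩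
    exact hne (Prod.ext (by omega) (by omega))
  · rintro ⟨e1, e2⟩
    refine no_adj_v hm hz ?_
    have he : ((w.1 + 1 : ℤ), w.2) = (w'.1, w'.2) := by
      rw [Prod.mk.injEq]; omega
    rw [he]; exact hz'
  · rintro ⟨e1, e2⟩
    have hz'' : m (w.1 - 1, w.2) = 0 := by
      have he : ((w.1 - 1 : ℤ), w.2) = (w'.1, w'.2) := by
        rw [Prod.mk.injEq]; omega
      rw [he]; exact hz'
    refine no_adj_v hm hz'' ?_
    rw [show w.1 - 1 + 1 = w.1 from by ring]
    exact hz
  · rintro ⟨e1, e2⟩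
    refine no_adj_h hm hz ?_
    have he : (w.1, (w.2 + 1 : ℤ)) = (w'.1, w'.2) := by
      rw [Prod.mk.injEq]; omega
    rw [he]; exact hz'
  · rintro ⟨e1, e2⟩
    have hz'' : m (w.1, w.2 - 1) = 0 := by
      have he : (w.1, (w.2 - 1 : ℤ)) = (w'.1, w'.2) := by
        rw [Prod.mk.injEq]; omega
      rw [he]; exact hz'
    refine no_adj_h hm hz'' ?_
    rw [show w.2 - 1 + 1 = w.2 from by ring]
    exact hz
  · rintro ⟨e1, e2⟩
    apply hdm
    have he : (w.1 + (dirW m w).1, w.2 + (dirW m w).2) = (w'.1, w'.2) := by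
      rw [Prod.mk.injEq]; omega
    rw [he]; exact hz'
  · rintro ⟨e1, e2⟩
    apply hdm'
    have he : (w'.1 + (dirW m w').1, w'.2 + (dirW m w').2) = (w.1, w.2) := by
      rw [Prod.mk.injEq]; omega
    rw [he]; exact hz
  · have e1 : z.1 - 4 * w.1 - 4 * (w'.1 - w.1) = z.1 - 4 * w'.1 := by ring
    have e2 : z.2 - 4 * w.2 - 4 * (w'.2 - w.2) = z.2 - 4 * w'.2 := by ring
    rw [e1, e2]
    exact p2

end Tiling

end WildAux

theorem wild_count_in_square_le (m : ℤ × ℤ → ℤ) (hm : IsSL2Tiling m)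
    (n : ℕ) (hn : 0 < n) :
    (Set.ncard {p : ℤ × ℤ | 0 ≤ p.1 ∧ p.1 < n ∧ 0 ≤ p.2 ∧ p.2 < n ∧ IsWild m p.1 p.2} : ℝ) ≤
      2 * (n + 2) ^ 2 / 5 := by
  classical
  open WildAux in
  set W : Finset (ℤ × ℤ) :=
    ((Finset.Icc (0 : ℤ) ((n : ℤ) - 1)) ×ˢ (Finset.Icc (0 : ℤ) ((n : ℤ) - 1))).filter
      (fun p => IsWild m p.1 p.2) with hW
  have hseteq : {p : ℤ × ℤ | 0 ≤ p.1 ∧ p.1 < n ∧ 0 ≤ p.2 ∧ p.2 < n ∧ IsWild m p.1 p.2}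
      = (W : Set (ℤ × ℤ)) := by
    ext p
    simp only [hW, Set.mem_setOf_eq, Finset.coe_filter, Finset.mem_product, Finset.mem_Icc,
      Set.mem_setOf_eq]
    constructor
    · rintro ⟨h1, h2, h3, h4, h5⟩
      exact ⟨⟨⟨h1, by omega⟩, ⟨h3, by omega⟩⟩, h5⟩
    · rintro ⟨⟨⟨h1, h2⟩, ⟨h3, h4⟩⟩, h5⟩
      exact ⟨h1, by omega, h3, by omega, h5⟩
  rw [hseteq, Set.ncard_coe_finset]
  -- the box containing all pentagons
  set B : Finset (ℤ × ℤ) :=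
    (Finset.Icc (-4 : ℤ) (4 * (n : ℤ))) ×ˢ (Finset.Icc (-4 : ℤ) (4 * (n : ℤ))) with hB
  have hBcard : B.card = (4 * n + 5) * (4 * n + 5) := by
    rw [hB, Finset.card_product, Int.card_Icc]
    have : (4 * (n : ℤ) + 1 - (-4)).toNat = 4 * n + 5 := by omega
    rw [this]
  have hwild : ∀ w ∈ W, IsWild m w.1 w.2 := by
    intro w hw
    exact (Finset.mem_filter.mp hw).2
  have hdisj : ∀ w ∈ W, ∀ w' ∈ W, w ≠ w' → Disjoint (pent m w) (pent m w') := by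
    intro w hw w' hw' hne
    exact pent_disjoint hm (hwild w hw) (hwild w' hw') hne
  have hsub : W.biUnion (pent m) ⊆ B := by
    intro z hz
    rw [Finset.mem_biUnion] at hz
    obtain ⟨w, hw, hzw⟩ := hz
    have hb := mem_pent_bounds hzw
    have hwmem := (Finset.mem_filter.mp hw).1
    rw [Finset.mem_product, Finset.mem_Icc, Finset.mem_Icc] at hwmem
    rw [hB, Finset.mem_product, Finset.mem_Icc, Finset.mem_Icc]
    omega
  have hcount : 40 * W.card ≤ (4 * n + 5) * (4 * n + 5) := by
    have h1 : (W.biUnion (pent m)).card = ∑ w ∈ W, (pent m w).card :=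
      Finset.card_biUnion hdisj
    have h2 : ∑ w ∈ W, (pent m w).card = 40 * W.card := by
      rw [Finset.sum_congr rfl (fun w _ => pent_card m w), Finset.sum_const, smul_eq_mul,
        Nat.mul_comm]
    have h3 : (W.biUnion (pent m)).card ≤ B.card := Finset.card_le_card hsub
    rw [h1, h2] at h3
    rwa [hBcard] at h3
  -- numeric conclusion
  have hc : (W.card : ℝ) ≤ ((4 * n + 5 : ℕ) : ℝ) * ((4 * n + 5 : ℕ) : ℝ) / 40 := by
    rw [le_div_iff₀ (by norm_num : (0:ℝ) < 40)]
    have := (Nat.cast_le (α := ℝ)).mpr hcount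
    push_cast at this ⊢
    linarith
  refine hc.trans ?_
  rw [div_le_div_iff₀ (by norm_num) (by norm_num)]
  push_cast
  nlinarith [Nat.cast_nonneg (α := ℝ) n]
end

section
/- Define M : ℤ × ℤ → ℤ by: M(i,j) = 2 if 3i + j ≡ 9 (mod 10); otherwise M(i,j) = 0 if i + j is odd; otherwise M(i,j) = −1 if j − i ≡ 0 (mod 4) and M(i,j) = 1 if j − i ≡ 2 (mod 4). Then for all i, j ∈ ℤ, the entry M(i,j) is wild if and only if i + j is odd and 3i + j ≢ 9 (mod 10); that is, the wild entries of M are exactly its zero entries. -/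
/-- The anti-periodic tiling by the 2×2 identity matrix, modified by placing the nonzero
entry `2` at each point of the sublattice `{(i, j) : 3i + j ≡ 9 (mod 10)}`. -/
def Mex : ℤ × ℤ → ℤ := fun p =>
  if (3 * p.1 + p.2) % 10 = 9 then 2
  else if (p.1 + p.2) % 2 = 1 then 0
  else if (p.2 - p.1) % 4 = 0 then -1 else 1

def Dex (i j : ℤ) : ℤ :=
  Mex (i-1, j-1) * Mex (i, j) * Mex (i+1, j+1)
  - Mex (i-1, j-1) * Mex (i, j+1) * Mex (i+1, j)
  - Mex (i-1, j) * Mex (i, j-1) * Mex (i+1, j+1)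
  + Mex (i-1, j) * Mex (i, j+1) * Mex (i+1, j-1)
  + Mex (i-1, j+1) * Mex (i, j-1) * Mex (i+1, j)
  - Mex (i-1, j+1) * Mex (i, j) * Mex (i+1, j-1)

lemma nbhdDet_eq (i j : ℤ) : nbhdDet Mex i j = Dex i j := by
  have h : ∀ x : ℤ, x + 2 - 1 = x + 1 := fun x => by ring
  simp [nbhdDet, Matrix.det_fin_three, Dex, h]

lemma mex_congr {i j i' j' : ℤ} (hi : i % 20 = i' % 20) (hj : j % 20 = j' % 20) :
    Mex (i, j) = Mex (i', j') := by
  unfold Mex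
  have h1 : ((3*i+j) % 10 = 9) ↔ ((3*i'+j') % 10 = 9) := by omega
  have h2 : ((i+j) % 2 = 1) ↔ ((i'+j') % 2 = 1) := by omega
  have h3 : ((j-i) % 4 = 0) ↔ ((j'-i') % 4 = 0) := by omega
  simp only [h1, h2, h3]

lemma dex_congr {i j i' j' : ℤ} (hi : i % 20 = i' % 20) (hj : j % 20 = j' % 20) :
    Dex i j = Dex i' j' := by
  unfold Dex
  rw [mex_congr (by omega : (i-1) % 20 = (i'-1) % 20) (by omega : (j-1) % 20 = (j'-1) % 20),
      mex_congr hi hj,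
      mex_congr (by omega : (i+1) % 20 = (i'+1) % 20) (by omega : (j+1) % 20 = (j'+1) % 20),
      mex_congr (by omega : (i-1) % 20 = (i'-1) % 20) hj,
      mex_congr hi (by omega : (j+1) % 20 = (j'+1) % 20),
      mex_congr hi (by omega : (j-1) % 20 = (j'-1) % 20),
      mex_congr (by omega : (i+1) % 20 = (i'+1) % 20) hj,
      mex_congr (by omega : (i-1) % 20 = (i'-1) % 20) (by omega : (j+1) % 20 = (j'+1) % 20),
      mex_congr (by omega : (i+1) % 20 = (i'+1) % 20) (by omega : (j-1) % 20 = (j'-1) % 20)]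

lemma key : ∀ a b : Fin 20,
    (Dex (a : ℤ) (b : ℤ) ≠ 0 ↔ (((a : ℤ) + b) % 2 = 1 ∧ (3 * (a : ℤ) + b) % 10 ≠ 9)) := by
  decide

theorem Mex_wild_iff (i j : ℤ) :
    IsWild Mex i j ↔ ((i + j) % 2 = 1 ∧ (3 * i + j) % 10 ≠ 9) := by
  have ha : 0 ≤ i % 20 ∧ i % 20 < 20 := by omega
  have hb : 0 ≤ j % 20 ∧ j % 20 < 20 := by omega
  set a : Fin 20 := ⟨(i % 20).toNat, by omega⟩
  set b : Fin 20 := ⟨(j % 20).toNat, by omega⟩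
  have haz : (a : ℤ) = i % 20 := by simp [a]; omega
  have hbz : (b : ℤ) = j % 20 := by simp [b]; omega
  have hD : nbhdDet Mex i j = Dex (a : ℤ) (b : ℤ) := by
    rw [nbhdDet_eq]
    exact dex_congr (by omega) (by omega)
  rw [IsWild, hD, key a b]
  constructor
  · rintro ⟨h1, h2⟩
    rw [haz, hbz] at h1 h2
    omega
  · rintro ⟨h1, h2⟩
    rw [haz, hbz]
    omega
end

section
/- Define M : ℤ × ℤ → ℤ by: M(i,j) = 2 if 3i + j ≡ 9 (mod 10); otherwise M(i,j) = 0 if i + j is odd; otherwise M(i,j) = −1 if j − i ≡ 0 (mod 4) and M(i,j) = 1 if j − i ≡ 2 (mod 4). Then the wild density of M equals 2/5: the ratio W(r)/T(r) tends to 2/5 as r → ∞, where T(r) is the number of points (i,j) ∈ ℤ² with i² + j² ≤ r² and W(r) is the number of such points at which M(i,j) is wild. -/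
/-- The number of integer points within distance `r` of the origin. -/
noncomputable def totalCount (r : ℕ) : ℕ :=
  Set.ncard {p : ℤ × ℤ | p.1 ^ 2 + p.2 ^ 2 ≤ (r : ℤ) ^ 2}

/-- The number of wild entries of `m` within distance `r` of the origin. -/
noncomputable def wildCount {R : Type*} [CommRing R] (m : ℤ × ℤ → R) (r : ℕ) : ℕ :=
  Set.ncard {p : ℤ × ℤ | p.1 ^ 2 + p.2 ^ 2 ≤ (r : ℤ) ^ 2 ∧ IsWild m p.1 p.2}

lemma mex_two {i j : ℤ} (h : (3*i+j) % 10 = 9) : Mex (i,j) = 2 := by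
  simp only [Mex]; rw [if_pos (by omega : (3*i+j) % 10 = 9)]

lemma mex_zero {i j : ℤ} (h : (i+j) % 2 = 1) (h2 : (3*i+j) % 10 ≠ 9) : Mex (i,j) = 0 := by
  simp only [Mex]; rw [if_neg h2, if_pos h]

lemma mex_one {i j : ℤ} (h : (i+j) % 2 = 0) (h2 : (j-i) % 4 = 2) : Mex (i,j) = 1 := by
  have h9 : ¬ (3*i+j) % 10 = 9 := by omega
  simp only [Mex]; rw [if_neg h9, if_neg (by omega : ¬ (i+j)%2 = 1), if_neg (by omega : ¬ (j-i)%4 = 0)]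

lemma mex_negone {i j : ℤ} (h : (i+j) % 2 = 0) (h2 : (j-i) % 4 = 0) : Mex (i,j) = -1 := by
  have h9 : ¬ (3*i+j) % 10 = 9 := by omega
  simp only [Mex]; rw [if_neg h9, if_neg (by omega : ¬ (i+j)%2 = 1), if_pos h2]

lemma mex_sl2 : IsSL2Tiling Mex := by
  intro i j
  by_cases hp : (i+j) % 2 = 0
  · have hoff : Mex (i, j+1) * Mex (i+1, j) = 0 := by
      by_cases h9 : (3*i+(j+1)) % 10 = 9
      · rw [mex_zero (i := i+1) (by omega) (by omega)]; ring
      · rw [mex_zero (i := i) (by omega) h9]; ring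
    rw [hoff]
    by_cases h4 : (j-i) % 4 = 0
    · rw [mex_negone hp h4, mex_negone (by omega) (by omega)]; ring
    · rw [mex_one hp (by omega), mex_one (by omega) (by omega)]; ring
  · have hdiag : Mex (i, j) * Mex (i+1, j+1) = 0 := by
      by_cases h9 : (3*i+j) % 10 = 9
      · rw [mex_zero (i := i+1) (j := j+1) (by omega) (by omega)]; ring
      · rw [mex_zero (i := i) (j := j) (by omega) h9]; ring
    rw [hdiag]
    by_cases h4 : (j-i) % 4 = 1
    · rw [mex_one (i := i) (j := j+1) (by omega) (by omega),
        mex_negone (i := i+1) (j := j) (by omega) (by omega)]; ring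
    · rw [mex_one (i := i+1) (j := j) (by omega) (by omega),
        mex_negone (i := i) (j := j+1) (by omega) (by omega)]; ring

lemma nbhdDet_eq_s11 {R : Type*} [CommRing R] (m : ℤ × ℤ → R) (i j : ℤ) :
    nbhdDet m i j =
      m (i-1, j-1) * m (i, j) * m (i+1, j+1)
      + m (i-1, j) * m (i, j+1) * m (i+1, j-1)
      + m (i-1, j+1) * m (i, j-1) * m (i+1, j)
      - m (i-1, j+1) * m (i, j) * m (i+1, j-1)
      - m (i-1, j) * m (i, j-1) * m (i+1, j+1)
      - m (i-1, j-1) * m (i, j+1) * m (i+1, j) := by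
  simp only [nbhdDet, Matrix.det_fin_three, Matrix.of_apply]
  norm_num
  simp only [show ∀ k:ℤ, k+2-1 = k+1 from fun k => by ring]
  ring

lemma condensation {R : Type*} [CommRing R] {m : ℤ × ℤ → R} (hm : IsSL2Tiling m) (i j : ℤ) :
    nbhdDet m i j * m (i, j) = 0 := by
  have h1 := hm (i-1) (j-1)
  have h2 := hm i j
  have h3 := hm (i-1) j
  have h4 := hm i (j-1)
  simp only [show i-1+1 = i from by ring, show j-1+1 = j from by ring] at h1 h3 h4
  rw [nbhdDet_eq_s11]
  linear_combination (m (i,j) * m (i+1,j+1) - m (i,j+1) * m (i+1,j)) * h1 + h2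
    - (m (i,j-1) * m (i+1,j) - m (i,j) * m (i+1,j-1)) * h3 - h4

lemma mex_not_wild {i j : ℤ} (h : ¬ ((i+j) % 2 = 1 ∧ (3*i+j) % 10 ≠ 9)) : ¬ IsWild Mex i j := by
  have hne : Mex (i, j) ≠ 0 := by
    by_cases h9 : (3*i+j) % 10 = 9
    · rw [mex_two h9]; norm_num
    · have hp : (i+j) % 2 = 0 := by omega
      by_cases h4 : (j-i) % 4 = 0
      · rw [mex_negone hp h4]; norm_num
      · rw [mex_one hp (by omega)]; norm_num
  have h0 := condensation mex_sl2 i j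
  simp only [IsWild, not_not]
  exact (mul_eq_zero.1 h0).resolve_right hne

lemma mex_wild {i j : ℤ} (h1 : (i+j) % 2 = 1) (h2 : (3*i+j) % 10 ≠ 9) : IsWild Mex i j := by
  have hdet : nbhdDet Mex i j = Mex (i-1,j-1) + Mex (i-1,j+1) + Mex (i+1,j-1) + Mex (i+1,j+1) := by
    rw [nbhdDet_eq_s11]
    rw [mex_zero (i := i) (j := j) h1 h2]
    by_cases h4 : (j-i) % 4 = 1
    · rw [mex_one (i := i-1) (j := j) (by omega) (by omega),
        mex_negone (i := i+1) (j := j) (by omega) (by omega),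
        mex_negone (i := i) (j := j-1) (by omega) (by omega),
        mex_one (i := i) (j := j+1) (by omega) (by omega)]
      ring
    · rw [mex_negone (i := i-1) (j := j) (by omega) (by omega),
        mex_one (i := i+1) (j := j) (by omega) (by omega),
        mex_one (i := i) (j := j-1) (by omega) (by omega),
        mex_negone (i := i) (j := j+1) (by omega) (by omega)]
      ring
  have hc : ∀ a b : ℤ, (a+b) % 2 = 1 → 0 ≤ Mex (a, b) := by
    intro a b hab
    by_cases h9 : (3*a+b) % 10 = 9
    · rw [mex_two h9]; norm_num
    · rw [mex_zero hab h9]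
  have hcc : Mex (i-1,j-1) + Mex (i-1,j+1) + Mex (i+1,j-1) + Mex (i+1,j+1) ≥ 2 := by
    have c1 := hc (i-1) (j-1) (by omega)
    have c2 := hc (i-1) (j+1) (by omega)
    have c3 := hc (i+1) (j-1) (by omega)
    have c4 := hc (i+1) (j+1) (by omega)
    have h10 : (3*i+j) % 10 = 1 ∨ (3*i+j) % 10 = 3 ∨ (3*i+j) % 10 = 5 ∨ (3*i+j) % 10 = 7 := by
      omega
    rcases h10 with h | h | h | h
    · rw [mex_two (i := i-1) (j := j+1) (by omega)]; omega
    · rw [mex_two (i := i-1) (j := j-1) (by omega)]; omega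
    · rw [mex_two (i := i+1) (j := j+1) (by omega)]; omega
    · rw [mex_two (i := i+1) (j := j-1) (by omega)]; omega
  simp only [IsWild, hdet]
  omega

lemma mex_wild_iff (i j : ℤ) : IsWild Mex i j ↔ ((i+j) % 2 = 1 ∧ (3*i+j) % 10 ≠ 9) := by
  constructor
  · intro hw
    by_contra h
    exact mex_not_wild h hw
  · intro ⟨h1, h2⟩; exact mex_wild h1 h2

/-! ### Counting -/

lemma int_abs_bounds {u r : ℤ} (hr : 0 ≤ r) (h : u^2 ≤ r^2) : -r ≤ u ∧ u ≤ r := by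
  constructor <;> nlinarith [sq_nonneg (u+r), sq_nonneg (u-r)]

lemma sq_sum_bound_up {q1 q2 a b r s : ℤ} (ha : 0 ≤ a) (ha' : a ≤ 9) (hb : 0 ≤ b) (hb' : b ≤ 9)
    (hr : 0 ≤ r) (hs : r + 19 ≤ 10*s) (h : (10*q1+a)^2 + (10*q2+b)^2 ≤ r^2) :
    q1^2 + q2^2 ≤ s^2 := by
  obtain ⟨hu1, hu2⟩ := int_abs_bounds hr (by nlinarith [sq_nonneg (10*q2+b)] : (10*q1+a)^2 ≤ r^2)
  obtain ⟨hv1, hv2⟩ := int_abs_bounds hr (by nlinarith [sq_nonneg (10*q1+a)] : (10*q2+b)^2 ≤ r^2)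
  nlinarith [mul_nonneg ha (by linarith : (0:ℤ) ≤ r + (10*q1+a)),
    mul_nonneg hb (by linarith : (0:ℤ) ≤ r + (10*q2+b)),
    mul_nonneg (by linarith : (0:ℤ) ≤ 9 - a) hr,
    mul_nonneg (by linarith : (0:ℤ) ≤ 9 - b) hr,
    mul_nonneg (by linarith : (0:ℤ) ≤ 9 - a) ha,
    mul_nonneg (by linarith : (0:ℤ) ≤ 9 - b) hb,
    mul_nonneg (by linarith : (0:ℤ) ≤ 10*s - (r+19)) (by linarith : (0:ℤ) ≤ 10*s + (r+19))]

lemma sq_sum_bound_down {q1 q2 a b r s : ℤ} (ha : 0 ≤ a) (ha' : a ≤ 9) (hb : 0 ≤ b) (hb' : b ≤ 9)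
    (hs : 0 ≤ s) (hr : 10*s + 20 ≤ r) (h : q1^2 + q2^2 ≤ s^2) :
    (10*q1+a)^2 + (10*q2+b)^2 ≤ r^2 := by
  obtain ⟨hu1, hu2⟩ := int_abs_bounds hs (by nlinarith [sq_nonneg q2] : q1^2 ≤ s^2)
  obtain ⟨hv1, hv2⟩ := int_abs_bounds hs (by nlinarith [sq_nonneg q1] : q2^2 ≤ s^2)
  nlinarith [mul_nonneg ha (by linarith : (0:ℤ) ≤ s - q1),
    mul_nonneg hb (by linarith : (0:ℤ) ≤ s - q2),
    mul_nonneg (by linarith : (0:ℤ) ≤ 9 - a) hs,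
    mul_nonneg (by linarith : (0:ℤ) ≤ 9 - b) hs,
    mul_nonneg (by linarith : (0:ℤ) ≤ 9 - a) ha,
    mul_nonneg (by linarith : (0:ℤ) ≤ 9 - b) hb,
    mul_nonneg (by linarith : (0:ℤ) ≤ r - (10*s+20)) (by linarith : (0:ℤ) ≤ r + (10*s+20))]

def Dset (x : ℕ) : Set (ℤ × ℤ) := {p | p.1 ^ 2 + p.2 ^ 2 ≤ (x : ℤ) ^ 2}

lemma Dset_finite (x : ℕ) : (Dset x).Finite := by
  apply Set.Finite.subset ((Set.finite_Icc (-(x:ℤ)) x).prod (Set.finite_Icc (-(x:ℤ)) x))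
  rintro ⟨p1, p2⟩ hp
  simp only [Dset, Set.mem_setOf_eq] at hp
  obtain ⟨a1, a2⟩ := int_abs_bounds (by positivity) (by nlinarith [sq_nonneg p2] : p1^2 ≤ (x:ℤ)^2)
  obtain ⟨b1, b2⟩ := int_abs_bounds (by positivity) (by nlinarith [sq_nonneg p1] : p2^2 ≤ (x:ℤ)^2)
  exact ⟨Set.mem_Icc.2 ⟨a1, a2⟩, Set.mem_Icc.2 ⟨b1, b2⟩⟩

noncomputable def Dfin (x : ℕ) : Finset (ℤ × ℤ) := (Dset_finite x).toFinset

lemma totalCount_eq (x : ℕ) : totalCount x = (Dfin x).card := by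
  exact Set.ncard_eq_toFinset_card _ (Dset_finite x)

def wildP (p : ℤ × ℤ) : Prop := (p.1 + p.2) % 2 = 1 ∧ (3 * p.1 + p.2) % 10 ≠ 9

instance : DecidablePred wildP := fun p => by unfold wildP; infer_instance

lemma wildCount_eq (x : ℕ) : wildCount Mex x = ((Dfin x).filter wildP).card := by
  have hs : {p : ℤ × ℤ | p.1 ^ 2 + p.2 ^ 2 ≤ (x : ℤ) ^ 2 ∧ IsWild Mex p.1 p.2}
      = ↑((Dfin x).filter wildP) := by
    ext p
    simp only [Set.mem_setOf_eq, Finset.coe_filter, Dfin, Set.Finite.mem_toFinset,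
      Dset, Set.mem_setOf_eq, mex_wild_iff, wildP]
  rw [wildCount, hs, Set.ncard_coe_finset]

noncomputable def resT : Finset (ℤ × ℤ) := Finset.Icc (0:ℤ) 9 ×ˢ Finset.Icc (0:ℤ) 9

def wres (c : ℤ × ℤ) : Prop := (c.1 + c.2) % 2 = 1 ∧ (3 * c.1 + c.2) % 10 ≠ 9

instance : DecidablePred wres := fun c => by unfold wres; infer_instance

lemma resT_card : resT.card = 100 := by decide

lemma wresT_card : (resT.filter wres).card = 40 := by decide

def resf (p : ℤ × ℤ) : ℤ × ℤ := (p.1 % 10, p.2 % 10)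

/-- The fiber over residue `(a,b)` is in bijection with `Qset`. -/
def Qset (r : ℕ) (a b : ℤ) : Set (ℤ × ℤ) :=
  {q | (10*q.1+a)^2 + (10*q.2+b)^2 ≤ (r : ℤ)^2}

lemma Qset_finite (r : ℕ) {a b : ℤ} (ha : 0 ≤ a) (ha' : a ≤ 9) (hb : 0 ≤ b) (hb' : b ≤ 9) :
    (Qset r a b).Finite := by
  apply Set.Finite.subset (Dset_finite (r/10+3))
  intro q hq
  simp only [Qset, Set.mem_setOf_eq] at hq
  have : (q.1:ℤ)^2 + q.2^2 ≤ ((r/10+3 : ℕ) : ℤ)^2 := by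
    apply sq_sum_bound_up ha ha' hb hb' (by positivity) _ hq
    push_cast
    omega
  exact this

lemma fiber_card_eq (r : ℕ) {a b : ℤ} (ha : 0 ≤ a) (ha' : a ≤ 9) (hb : 0 ≤ b) (hb' : b ≤ 9) :
    ((Dfin r).filter (fun p => resf p = (a, b))).card = (Qset r a b).ncard := by
  have himg : (↑((Dfin r).filter (fun p => resf p = (a, b))) : Set (ℤ × ℤ))
      = (fun q : ℤ × ℤ => (10*q.1+a, 10*q.2+b)) '' Qset r a b := by
    ext ⟨p1, p2⟩
    simp only [Finset.coe_filter, Dfin, Set.Finite.mem_toFinset, Dset, Set.mem_setOf_eq,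
      resf, Prod.mk.injEq, Set.mem_image, Qset, Prod.ext_iff]
    constructor
    · rintro ⟨hd, h1, h2⟩
      refine ⟨((p1-a)/10, (p2-b)/10), ?_, ?_, ?_⟩ <;> simp only []
      · have e1 : 10*((p1-a)/10)+a = p1 := by omega
        have e2 : 10*((p2-b)/10)+b = p2 := by omega
        rw [e1, e2]; exact hd
      · omega
      · omega
    · rintro ⟨⟨q1, q2⟩, hq, e1, e2⟩
      simp only [] at hq e1 e2
      refine ⟨?_, by omega, by omega⟩
      rw [← e1, ← e2]; exact hq
  have := Set.ncard_coe_finset ((Dfin r).filter (fun p => resf p = (a, b)))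
  rw [← this, himg, Set.ncard_image_of_injective]
  intro q q' hqq
  simp only [Prod.mk.injEq] at hqq
  exact Prod.ext (by omega) (by omega)

lemma Dset_mono {x y : ℕ} (h : x ≤ y) : Dset x ⊆ Dset y := by
  intro p hp
  simp only [Dset, Set.mem_setOf_eq] at *
  have : ((x:ℤ))^2 ≤ (y:ℤ)^2 := by
    have : (x:ℤ) ≤ y := by exact_mod_cast h
    nlinarith [Int.ofNat_nonneg x]
  linarith

lemma totalCount_mono {x y : ℕ} (h : x ≤ y) : totalCount x ≤ totalCount y :=
  Set.ncard_le_ncard (Dset_mono h) (Dset_finite y)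

lemma fiber_card_le (r : ℕ) {a b : ℤ} (ha : 0 ≤ a) (ha' : a ≤ 9) (hb : 0 ≤ b) (hb' : b ≤ 9) :
    ((Dfin r).filter (fun p => resf p = (a, b))).card ≤ totalCount (r/10+3) := by
  rw [fiber_card_eq r ha ha' hb hb', totalCount]
  apply Set.ncard_le_ncard _ (Dset_finite (r/10+3))
  intro q hq
  simp only [Qset, Set.mem_setOf_eq] at hq ⊢
  apply sq_sum_bound_up ha ha' hb hb' (by positivity) _ hq
  push_cast; omega

lemma le_fiber_card (r : ℕ) (hr : 20 ≤ r) {a b : ℤ} (ha : 0 ≤ a) (ha' : a ≤ 9)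
    (hb : 0 ≤ b) (hb' : b ≤ 9) :
    totalCount (r/10-2) ≤ ((Dfin r).filter (fun p => resf p = (a, b))).card := by
  rw [fiber_card_eq r ha ha' hb hb', totalCount]
  apply Set.ncard_le_ncard _ (Qset_finite r ha ha' hb hb')
  intro q hq
  simp only [Qset, Set.mem_setOf_eq] at hq ⊢
  apply sq_sum_bound_down ha ha' hb hb' (by positivity) _ hq
  push_cast; omega

lemma totalCount_le (r : ℕ) : totalCount r ≤ 100 * totalCount (r/10+3) := by
  rw [totalCount_eq r]
  rw [Finset.card_eq_sum_card_fiberwise (f := resf) (t := resT)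
    (fun p _ => by simp only [Finset.mem_coe, resT, resf, Finset.mem_product, Finset.mem_Icc]; omega)]
  calc ∑ c ∈ resT, ((Dfin r).filter (fun p => resf p = c)).card
      ≤ ∑ _c ∈ resT, totalCount (r/10+3) := by
        apply Finset.sum_le_sum
        rintro ⟨a, b⟩ hc
        simp only [resT, Finset.mem_product, Finset.mem_Icc] at hc
        exact fiber_card_le r hc.1.1 hc.1.2 hc.2.1 hc.2.2
    _ = 100 * totalCount (r/10+3) := by rw [Finset.sum_const, resT_card]; ring

lemma le_totalCount (r : ℕ) (hr : 20 ≤ r) : 100 * totalCount (r/10-2) ≤ totalCount r := by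
  rw [totalCount_eq r]
  rw [Finset.card_eq_sum_card_fiberwise (f := resf) (t := resT)
    (fun p _ => by simp only [Finset.mem_coe, resT, resf, Finset.mem_product, Finset.mem_Icc]; omega)]
  calc (100 : ℕ) * totalCount (r/10-2)
      = ∑ _c ∈ resT, totalCount (r/10-2) := by rw [Finset.sum_const, resT_card]; ring
    _ ≤ ∑ c ∈ resT, ((Dfin r).filter (fun p => resf p = c)).card := by
        apply Finset.sum_le_sum
        rintro ⟨a, b⟩ hc
        simp only [resT, Finset.mem_product, Finset.mem_Icc] at hc
        exact le_fiber_card r hr hc.1.1 hc.1.2 hc.2.1 hc.2.2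

lemma wild_fiber_split (r : ℕ) :
    ((Dfin r).filter wildP).card
      = ∑ c ∈ resT.filter wres, ((Dfin r).filter (fun p => resf p = c)).card := by
  rw [Finset.card_eq_sum_card_fiberwise (f := resf) (t := resT.filter wres)
    (fun p hp => by
      simp only [Finset.mem_coe, Finset.mem_filter] at hp
      simp only [Finset.mem_coe, Finset.mem_filter, resT, resf, Finset.mem_product, Finset.mem_Icc, wres]
      have := hp.2
      unfold wildP at this
      omega)]
  apply Finset.sum_congr rfl
  rintro ⟨a, b⟩ hc
  simp only [Finset.mem_filter, resT, Finset.mem_product, Finset.mem_Icc, wres] at hc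
  rw [Finset.filter_filter]
  congr 1
  apply Finset.filter_congr
  intro p _
  simp only [resf, Prod.mk.injEq, wildP]
  constructor
  · rintro ⟨_, h⟩; exact h
  · intro h; refine ⟨?_, h⟩; omega

lemma wildCount_le (r : ℕ) : wildCount Mex r ≤ 40 * totalCount (r/10+3) := by
  rw [wildCount_eq, wild_fiber_split]
  calc ∑ c ∈ resT.filter wres, ((Dfin r).filter (fun p => resf p = c)).card
      ≤ ∑ _c ∈ resT.filter wres, totalCount (r/10+3) := by
        apply Finset.sum_le_sum
        rintro ⟨a, b⟩ hc
        simp only [Finset.mem_filter, resT, Finset.mem_product, Finset.mem_Icc] at hc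
        exact fiber_card_le r hc.1.1.1 hc.1.1.2 hc.1.2.1 hc.1.2.2
    _ = 40 * totalCount (r/10+3) := by rw [Finset.sum_const, wresT_card]; ring

lemma le_wildCount (r : ℕ) (hr : 20 ≤ r) : 40 * totalCount (r/10-2) ≤ wildCount Mex r := by
  rw [wildCount_eq, wild_fiber_split]
  calc (40:ℕ) * totalCount (r/10-2)
      = ∑ _c ∈ resT.filter wres, totalCount (r/10-2) := by
        rw [Finset.sum_const, wresT_card]; ring
    _ ≤ _ := by
        apply Finset.sum_le_sum
        rintro ⟨a, b⟩ hc
        simp only [Finset.mem_filter, resT, Finset.mem_product, Finset.mem_Icc] at hc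
        exact le_fiber_card r hr hc.1.1.1 hc.1.1.2 hc.1.2.1 hc.1.2.2

lemma nat_sqrt_subadd (x y : ℕ) : Nat.sqrt (x + y) ≤ Nat.sqrt x + Nat.sqrt y + 1 := by
  have hx := Nat.lt_succ_sqrt x
  have hy := Nat.lt_succ_sqrt y
  have : x + y < (Nat.sqrt x + Nat.sqrt y + 2) * (Nat.sqrt x + Nat.sqrt y + 2) := by nlinarith
  have := Nat.sqrt_lt.2 this
  omega

lemma annulus_fiber_bound (s : ℕ) (i : ℤ) (hi : i^2 ≤ ((s+5:ℕ):ℤ)^2) :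
    (((Dfin (s+5)).filter (fun p => (s:ℤ)^2 < p.1^2 + p.2^2)).filter
      (fun p => p.1 = i)).card ≤ 2 * (Nat.sqrt (10*s+25) + 2) := by
  set F := ((Dfin (s+5)).filter (fun p => (s:ℤ)^2 < p.1^2 + p.2^2)).filter
      (fun p => p.1 = i) with hF
  set A : ℕ := ((s:ℤ)^2 - i^2).toNat with hA
  set B : ℕ := (((s+5:ℕ):ℤ)^2 - i^2).toNat with hB
  have hBz : ((B:ℤ)) = ((s+5:ℕ):ℤ)^2 - i^2 := Int.toNat_of_nonneg (by linarith)
  have hmem : ∀ p ∈ F, (s:ℤ)^2 - i^2 < p.2^2 ∧ p.2^2 ≤ ((s+5:ℕ):ℤ)^2 - i^2 := by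
    intro p hp
    simp only [hF, Finset.mem_filter, Dfin, Set.Finite.mem_toFinset, Dset,
      Set.mem_setOf_eq] at hp
    obtain ⟨⟨hp1, hp2⟩, hp3⟩ := hp
    rw [hp3] at hp1 hp2
    exact ⟨by linarith, by linarith⟩
  have hcard : F.card ≤ 2 * (Finset.Icc (Nat.sqrt A) (Nat.sqrt B)).card := by
    refine Finset.card_le_mul_card_image_of_maps_to
      (t := Finset.Icc (Nat.sqrt A) (Nat.sqrt B)) (f := fun p => p.2.natAbs) ?_ 2 ?_
    · intro p hp
      obtain ⟨h1, h2⟩ := hmem p hp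
      have hsq : ((p.2.natAbs : ℤ))^2 = p.2^2 := Int.natAbs_sq p.2
      rw [Finset.mem_Icc]
      refine ⟨?_, ?_⟩
      · by_contra hlt
        push_neg at hlt
        have h3 : p.2.natAbs + 1 ≤ Nat.sqrt A := hlt
        have h4 : (p.2.natAbs + 1) * (p.2.natAbs + 1) ≤ A := Nat.le_sqrt.1 h3
        rcases le_or_gt 0 ((s:ℤ)^2 - i^2) with hz | hz
        · have hAz : ((A:ℤ)) = (s:ℤ)^2 - i^2 := Int.toNat_of_nonneg hz
          have h6 : ((p.2.natAbs : ℤ) + 1) * ((p.2.natAbs : ℤ) + 1) ≤ (A:ℤ) := by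
            exact_mod_cast h4
          nlinarith [Int.ofNat_nonneg p.2.natAbs]
        · have hA0 : A = 0 := by
            rw [hA]; exact Int.toNat_of_nonpos (by linarith)
          have hpos : 0 < (p.2.natAbs+1)*(p.2.natAbs+1) :=
            Nat.mul_pos (Nat.succ_pos _) (Nat.succ_pos _)
          linarith [h4, hpos, hA0]
      · rw [Nat.le_sqrt]
        have h6 : ((p.2.natAbs * p.2.natAbs : ℕ) : ℤ) ≤ (B:ℤ) := by
          push_cast
          rw [abs_mul_abs_self]
          nlinarith
        exact_mod_cast h6
    · intro n _
      refine le_trans (Finset.card_le_card (?_ : _ ⊆ ({(i, (n:ℤ)), (i, -(n:ℤ))} : Finset (ℤ × ℤ)))) ?_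
      · intro p hp
        simp only [Finset.mem_filter, hF] at hp
        obtain ⟨⟨⟨_, _⟩, hp1⟩, hp2⟩ := hp
        rcases Int.natAbs_eq p.2 with h | h
        · simp only [Finset.mem_insert, Finset.mem_singleton]
          left
          rw [Prod.ext_iff]
          exact ⟨hp1, by rw [h, hp2]⟩
        · simp only [Finset.mem_insert, Finset.mem_singleton]
          right
          rw [Prod.ext_iff]
          exact ⟨hp1, by rw [h, hp2]⟩
      · apply le_trans (Finset.card_insert_le _ _)
        simp
  apply le_trans hcard
  have hBA : Nat.sqrt B ≤ Nat.sqrt A + Nat.sqrt (10*s+25) + 1 := by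
    have hle : B ≤ A + (10*s+25) := by
      rcases le_or_gt 0 ((s:ℤ)^2 - i^2) with hz | hz
      · have hAz : ((A:ℤ)) = (s:ℤ)^2 - i^2 := Int.toNat_of_nonneg hz
        have : (B:ℤ) ≤ (A:ℤ) + ((10*s+25 : ℕ) : ℤ) := by
          rw [hBz, hAz]; push_cast; nlinarith
        exact_mod_cast this
      · have : (B:ℤ) ≤ ((10*s+25 : ℕ):ℤ) := by
          rw [hBz]; push_cast at hz ⊢; nlinarith
        have : B ≤ 10*s+25 := by exact_mod_cast this
        omega
    calc Nat.sqrt B ≤ Nat.sqrt (A + (10*s+25)) := Nat.sqrt_le_sqrt hle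
      _ ≤ _ := nat_sqrt_subadd _ _
  rw [Nat.card_Icc]
  omega

lemma totalCount_succ5 (s : ℕ) :
    totalCount (s+5) ≤ totalCount s + (2*s+11) * (2*(Nat.sqrt (10*s+25)+2)) := by
  classical
  set Ann := (Dfin (s+5)).filter (fun p => (s:ℤ)^2 < p.1^2 + p.2^2) with hAnn
  have hsub : Dfin (s+5) ⊆ Dfin s ∪ Ann := by
    intro p hp
    simp only [Dfin, Set.Finite.mem_toFinset, Dset, Set.mem_setOf_eq] at hp
    rcases le_or_gt (p.1^2 + p.2^2) ((s:ℤ)^2) with h | h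
    · exact Finset.mem_union_left _ (by
        simp only [Dfin, Set.Finite.mem_toFinset, Dset, Set.mem_setOf_eq]; exact h)
    · exact Finset.mem_union_right _ (by
        simp only [hAnn, Finset.mem_filter, Dfin, Set.Finite.mem_toFinset, Dset,
          Set.mem_setOf_eq]
        exact ⟨hp, h⟩)
  have h1 : totalCount (s+5) ≤ totalCount s + Ann.card := by
    rw [totalCount_eq, totalCount_eq]
    calc (Dfin (s+5)).card ≤ (Dfin s ∪ Ann).card := Finset.card_le_card hsub
      _ ≤ _ := Finset.card_union_le _ _
  have h2 : Ann.card ≤ (2*s+11) * (2*(Nat.sqrt (10*s+25)+2)) := by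
    have hmap : ∀ p ∈ Ann, p.1 ∈ Finset.Icc (-((s+5:ℕ):ℤ)) ((s+5:ℕ):ℤ) := by
      intro p hp
      simp only [hAnn, Finset.mem_filter, Dfin, Set.Finite.mem_toFinset, Dset,
        Set.mem_setOf_eq] at hp
      obtain ⟨hle, _⟩ := hp
      obtain ⟨a1, a2⟩ := int_abs_bounds (by positivity)
        (by nlinarith [sq_nonneg p.2] : p.1^2 ≤ ((s+5:ℕ):ℤ)^2)
      exact Finset.mem_Icc.2 ⟨a1, a2⟩
    rw [Finset.card_eq_sum_card_fiberwise hmap]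
    calc ∑ i ∈ Finset.Icc (-((s+5:ℕ):ℤ)) ((s+5:ℕ):ℤ), (Ann.filter (fun p => p.1 = i)).card
        ≤ ∑ i ∈ Finset.Icc (-((s+5:ℕ):ℤ)) ((s+5:ℕ):ℤ), 2*(Nat.sqrt (10*s+25)+2) := by
          apply Finset.sum_le_sum
          intro i hi
          rw [Finset.mem_Icc] at hi
          exact annulus_fiber_bound s i (by nlinarith [hi.1, hi.2])
      _ = (2*s+11) * (2*(Nat.sqrt (10*s+25)+2)) := by
          rw [Finset.sum_const, Int.card_Icc]
          have : (((s+5:ℕ):ℤ) + 1 - -((s+5:ℕ):ℤ)).toNat = 2*s+11 := by push_cast; omega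
          rw [this]; ring
  omega

lemma sq_le_totalCount (s : ℕ) : s^2 ≤ totalCount s := by
  classical
  set k := s / 2 with hk
  have hsub : ↑(Finset.Icc (-(k:ℤ)) (k:ℤ) ×ˢ Finset.Icc (-(k:ℤ)) (k:ℤ)) ⊆ Dset s := by
    rintro ⟨p1, p2⟩ hp
    simp only [Finset.coe_product, Set.mem_prod, Finset.coe_Icc, Set.mem_Icc] at hp
    simp only [Dset, Set.mem_setOf_eq]
    have h2k : 2*(k:ℤ) ≤ (s:ℤ) := by exact_mod_cast (by omega : 2*k ≤ s)
    nlinarith [hp.1.1, hp.1.2, hp.2.1, hp.2.2, Int.ofNat_nonneg k]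
  have h1 := Set.ncard_le_ncard hsub (Dset_finite s)
  rw [Set.ncard_coe_finset] at h1
  rw [Finset.card_product, Int.card_Icc] at h1
  have hcic : ((k:ℤ) + 1 - -(k:ℤ)).toNat = 2*k+1 := by omega
  rw [hcic] at h1
  have h2 : s^2 ≤ (2*k+1) * (2*k+1) := by
    have h3 : s ≤ 2*k+1 := by omega
    calc s^2 = s*s := sq s
      _ ≤ (2*k+1)*(2*k+1) := Nat.mul_le_mul h3 h3
  exact le_trans h2 h1

lemma one_le_totalCount (s : ℕ) : 1 ≤ totalCount s := by
  rw [totalCount]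
  have : ((0:ℤ), (0:ℤ)) ∈ {p : ℤ × ℤ | p.1 ^ 2 + p.2 ^ 2 ≤ (s : ℤ) ^ 2} := by
    simp only [Set.mem_setOf_eq]
    positivity
  exact (Set.ncard_pos (Dset_finite s)).2 ⟨_, this⟩

open Filter Topology

lemma tendsto_sqrt_nat : Tendsto (fun s : ℕ => Real.sqrt s) atTop atTop := by
  rw [tendsto_atTop_atTop]
  intro b
  refine ⟨(⌈b⌉₊)^2, fun s hs => ?_⟩
  calc b ≤ (⌈b⌉₊ : ℝ) := Nat.le_ceil b
    _ ≤ Real.sqrt s := by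
        have h1 : ((⌈b⌉₊:ℝ))^2 ≤ (s:ℝ) := by exact_mod_cast hs
        nlinarith [Real.sq_sqrt (show (0:ℝ) ≤ (s:ℝ) by positivity), Real.sqrt_nonneg (s:ℝ)]

lemma E_div_tendsto :
    Tendsto (fun s : ℕ => (((2*s+11) * (2*(Nat.sqrt (10*s+25)+2)) : ℕ) : ℝ) / (s:ℝ)^2)
      atTop (𝓝 0) := by
  have h0 : Tendsto (fun s : ℕ => 208 / Real.sqrt s) atTop (𝓝 0) :=
    Tendsto.div_atTop tendsto_const_nhds tendsto_sqrt_nat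
  apply tendsto_of_tendsto_of_tendsto_of_le_of_le' tendsto_const_nhds h0
  · filter_upwards [eventually_ge_atTop 1] with s hs
    positivity
  · filter_upwards [eventually_ge_atTop 11] with s hs
    have hs1 : (1:ℝ) ≤ (s:ℝ) := by exact_mod_cast (by omega : 1 ≤ s)
    have hsq1 : (1:ℝ) ≤ Real.sqrt s := by
      rw [show (1:ℝ) = Real.sqrt 1 from (Real.sqrt_one).symm]
      exact Real.sqrt_le_sqrt hs1
    have hsqnn : (0:ℝ) ≤ Real.sqrt s := Real.sqrt_nonneg _
    have hss : Real.sqrt s * Real.sqrt s = (s:ℝ) := Real.mul_self_sqrt (by positivity)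
    have hA : ((Nat.sqrt (10*s+25) : ℕ) : ℝ) ≤ 6 * Real.sqrt s := by
      calc ((Nat.sqrt (10*s+25) : ℕ) : ℝ) ≤ Real.sqrt ((10*s+25 : ℕ) : ℝ) :=
            Real.nat_sqrt_le_real_sqrt
        _ ≤ Real.sqrt (36 * s) := by
            apply Real.sqrt_le_sqrt
            push_cast
            nlinarith
        _ = 6 * Real.sqrt s := by
            rw [show (36 : ℝ) * s = 6^2 * s from by ring, Real.sqrt_mul (by positivity),
              Real.sqrt_sq (by norm_num)]
    have hnum : (((2*s+11) * (2*(Nat.sqrt (10*s+25)+2)) : ℕ) : ℝ) ≤ 208 * ((s:ℝ) * Real.sqrt s) := by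
      push_cast
      have e1 : (2*(s:ℝ)+11) ≤ 13 * s := by linarith
      have e2 : 2*(((Nat.sqrt (10*s+25) : ℕ)):ℝ) + 4 ≤ 16 * Real.sqrt s := by
        nlinarith
      calc (2*(s:ℝ)+11) * (2*((((Nat.sqrt (10*s+25) : ℕ)):ℝ)+2))
          ≤ (13*(s:ℝ)) * (16 * Real.sqrt s) := by
            have e2' : 2*((((Nat.sqrt (10*s+25) : ℕ)):ℝ)+2) ≤ 16 * Real.sqrt s := by nlinarith
            apply mul_le_mul (by linarith) e2' (by positivity) (by positivity)
        _ = 208 * ((s:ℝ) * Real.sqrt s) := by ring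
    rw [div_le_div_iff₀ (by positivity) (by positivity)]
    calc (((2*s+11) * (2*(Nat.sqrt (10*s+25)+2)) : ℕ) : ℝ) * Real.sqrt s
        ≤ (208 * ((s:ℝ) * Real.sqrt s)) * Real.sqrt s := by
          apply mul_le_mul_of_nonneg_right hnum hsqnn
      _ = 208 * ((s:ℝ) * (Real.sqrt s * Real.sqrt s)) := by ring
      _ = 208 * (s:ℝ)^2 := by rw [hss]; ring

lemma ratio_tendsto :
    Tendsto (fun s : ℕ => (totalCount (s+5) : ℝ) / (totalCount s : ℝ)) atTop (𝓝 1) := by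
  have hpos : ∀ s : ℕ, (0:ℝ) < (totalCount s : ℝ) := by
    intro s
    exact_mod_cast one_le_totalCount s
  apply tendsto_of_tendsto_of_tendsto_of_le_of_le'
    (tendsto_const_nhds : Tendsto (fun _ : ℕ => (1:ℝ)) atTop (𝓝 1))
    (by simpa using (tendsto_const_nhds.add E_div_tendsto :
      Tendsto (fun s : ℕ => 1 + (((2*s+11) * (2*(Nat.sqrt (10*s+25)+2)) : ℕ) : ℝ) / (s:ℝ)^2)
        atTop (𝓝 (1 + 0))))
  · filter_upwards with s
    rw [le_div_iff₀ (hpos s), one_mul]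
    exact_mod_cast totalCount_mono (by omega : s ≤ s + 5)
  · filter_upwards [eventually_ge_atTop 1] with s hs
    have hsq : (0:ℝ) < (s:ℝ)^2 := by
      have : (1:ℝ) ≤ (s:ℝ) := by exact_mod_cast hs
      positivity
    have h1 : (totalCount (s+5) : ℝ) ≤ (totalCount s : ℝ)
        + (((2*s+11) * (2*(Nat.sqrt (10*s+25)+2)) : ℕ) : ℝ) := by
      exact_mod_cast totalCount_succ5 s
    have h2 : ((s:ℝ))^2 ≤ (totalCount s : ℝ) := by exact_mod_cast sq_le_totalCount s
    rw [div_le_iff₀ (hpos s)]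
    have hE : (0:ℝ) ≤ (((2*s+11) * (2*(Nat.sqrt (10*s+25)+2)) : ℕ) : ℝ) := by positivity
    have h3 : (((2*s+11) * (2*(Nat.sqrt (10*s+25)+2)) : ℕ) : ℝ) / (s:ℝ)^2 * (totalCount s : ℝ)
        ≥ (((2*s+11) * (2*(Nat.sqrt (10*s+25)+2)) : ℕ) : ℝ) := by
      rw [ge_iff_le, div_mul_eq_mul_div, le_div_iff₀ hsq]
      exact mul_le_mul_of_nonneg_left h2 hE
    calc (totalCount (s+5) : ℝ)
        ≤ (totalCount s : ℝ) + (((2*s+11) * (2*(Nat.sqrt (10*s+25)+2)) : ℕ) : ℝ) := h1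
      _ ≤ (totalCount s : ℝ)
          + (((2*s+11) * (2*(Nat.sqrt (10*s+25)+2)) : ℕ) : ℝ) / (s:ℝ)^2 * (totalCount s : ℝ) := by
          linarith
      _ = (1 + (((2*s+11) * (2*(Nat.sqrt (10*s+25)+2)) : ℕ) : ℝ) / (s:ℝ)^2) * (totalCount s : ℝ) := by
          ring
      _ = (1 + (2*(s:ℝ)+11) * (2*(((Nat.sqrt (10*s+25) : ℕ) :ℝ)+2)) / (s:ℝ)^2) * (totalCount s : ℝ) := by
          push_cast; ring

lemma ratio_tendsto' :
    Tendsto (fun s : ℕ => (totalCount s : ℝ) / (totalCount (s+5) : ℝ)) atTop (𝓝 1) := by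
  have := (ratio_tendsto).inv₀ one_ne_zero
  simp only [inv_one] at this
  convert this using 2 with s
  rw [inv_div]

theorem Mex_wild_density_eq_two_fifths :
    Filter.Tendsto (fun r : ℕ => (wildCount Mex r : ℝ) / (totalCount r : ℝ))
      Filter.atTop (nhds (2 / 5)) := by
  have hpos : ∀ s : ℕ, (0:ℝ) < (totalCount s : ℝ) := fun s => by
    exact_mod_cast one_le_totalCount s
  have hφ : Tendsto (fun r : ℕ => r/10 - 2) atTop atTop :=
    tendsto_atTop_atTop.2 fun b => ⟨10*(b+2), fun a ha => by omega⟩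
  have hlowt : Tendsto (fun r : ℕ =>
      (2/5 : ℝ) * ((totalCount (r/10-2) : ℝ) / (totalCount (r/10-2 + 5) : ℝ)))
      atTop (𝓝 (2/5)) := by
    have := (tendsto_const_nhds : Tendsto (fun _ : ℕ => (2/5:ℝ)) atTop (𝓝 (2/5))).mul
      (ratio_tendsto'.comp hφ)
    simpa using this
  have hupt : Tendsto (fun r : ℕ =>
      (2/5 : ℝ) * ((totalCount (r/10-2 + 5) : ℝ) / (totalCount (r/10-2) : ℝ)))
      atTop (𝓝 (2/5)) := by
    have := (tendsto_const_nhds : Tendsto (fun _ : ℕ => (2/5:ℝ)) atTop (𝓝 (2/5))).mul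
      (ratio_tendsto.comp hφ)
    simpa using this
  apply tendsto_of_tendsto_of_tendsto_of_le_of_le' hlowt hupt
  · filter_upwards [eventually_ge_atTop 20] with r hr
    have e35 : r/10 - 2 + 5 = r/10 + 3 := by omega
    have a1 : ((40 * totalCount (r/10-2) : ℕ) : ℝ) ≤ (wildCount Mex r : ℝ) := by
      exact_mod_cast le_wildCount r hr
    have a2 : ((totalCount r : ℕ) : ℝ) ≤ ((100 * totalCount (r/10+3) : ℕ) : ℝ) := by
      exact_mod_cast totalCount_le r
    rw [e35]
    have key : ((40 * totalCount (r/10-2) : ℕ) : ℝ) / ((100 * totalCount (r/10+3) : ℕ) : ℝ)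
        ≤ (wildCount Mex r : ℝ) / (totalCount r : ℝ) :=
      div_le_div₀ (by positivity) a1 (hpos r) a2
    refine le_trans (le_of_eq ?_) key
    have hT : (totalCount (r/10+3) : ℝ) ≠ 0 := ne_of_gt (hpos _)
    push_cast
    field_simp
    ring
  · filter_upwards [eventually_ge_atTop 20] with r hr
    have e35 : r/10 - 2 + 5 = r/10 + 3 := by omega
    have a1 : ((wildCount Mex r : ℕ) : ℝ) ≤ ((40 * totalCount (r/10+3) : ℕ) : ℝ) := by
      exact_mod_cast wildCount_le r
    have a2 : ((100 * totalCount (r/10-2) : ℕ) : ℝ) ≤ ((totalCount r : ℕ) : ℝ) := by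
      exact_mod_cast le_totalCount r hr
    have hT0 : (0:ℝ) < ((100 * totalCount (r/10-2) : ℕ) : ℝ) := by
      exact_mod_cast Nat.mul_pos (by norm_num) (one_le_totalCount (r/10-2))
    rw [e35]
    have key : (wildCount Mex r : ℝ) / (totalCount r : ℝ)
        ≤ ((40 * totalCount (r/10+3) : ℕ) : ℝ) / ((100 * totalCount (r/10-2) : ℕ) : ℝ) :=
      div_le_div₀ (by positivity) a1 hT0 a2
    refine le_trans key (le_of_eq ?_)
    have hT : (totalCount (r/10-2) : ℝ) ≠ 0 := ne_of_gt (hpos _)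
    push_cast
    field_simp
    ring
end

section
/- Let K be the field of fractions of the multivariate polynomial ring ℚ[x_{(i,j)} : (i,j) ∈ ℤ × ℤ]. Define M : ℤ × ℤ → K by: M(i,j) = x_{(i,j)} if 3i + j ≡ 9 (mod 10); otherwise M(i,j) = 0 if i + j is odd; otherwise M(i,j) = −1 if j − i ≡ 0 (mod 4) and M(i,j) = 1 if j − i ≡ 2 (mod 4). Then every contiguous block of M has rank deficiency at most 2: for all i₀, j₀ ∈ ℤ and all positive integers p, q, the p × q matrix over K with (r,s)-entry M(i₀ + r, j₀ + s) for 0 ≤ r < p, 0 ≤ s < q has rank at least min(p, q) − 2. -/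
/-- The field of fractions of the polynomial ring over `ℚ` in the variables `x_(i,j)`,
`(i,j) ∈ ℤ × ℤ`. -/
abbrev K : Type := FractionRing (MvPolynomial (ℤ × ℤ) ℚ)

/-- The anti-periodic tiling by the 2×2 identity matrix, modified by placing the formal
variable `x_(i,j)` at each point of the sublattice `{(i, j) : 3i + j ≡ 9 (mod 10)}`. -/
noncomputable def MexK : ℤ × ℤ → K := fun p =>
  if (3 * p.1 + p.2) % 10 = 9 then
    algebraMap (MvPolynomial (ℤ × ℤ) ℚ) K (MvPolynomial.X p)
  else if (p.1 + p.2) % 2 = 1 then 0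
  else if (p.2 - p.1) % 4 = 0 then -1 else 1

namespace MexKAux

abbrev Poly : Type := MvPolynomial (ℤ × ℤ) ℚ

noncomputable def preM : ℤ × ℤ → Poly := fun p =>
  if (3 * p.1 + p.2) % 10 = 9 then MvPolynomial.X p
  else if (p.1 + p.2) % 2 = 1 then 0
  else if (p.2 - p.1) % 4 = 0 then -1 else 1

lemma MexK_eq (v : ℤ × ℤ) : MexK v = algebraMap Poly K (preM v) := by
  unfold MexK preM
  split_ifs <;> simp


noncomputable def dd (v : ℤ × ℤ) : (ℤ × ℤ) →₀ ℕ :=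
  if (3 * v.1 + v.2) % 10 = 9 then Finsupp.single v 1 else 0

def cc (v : ℤ × ℤ) : ℚ :=
  if (3 * v.1 + v.2) % 10 = 9 then 1
  else if (v.1 + v.2) % 2 = 1 then 0
  else if (v.2 - v.1) % 4 = 0 then -1 else 1

lemma preM_eq_monomial (v : ℤ × ℤ) :
    preM v = MvPolynomial.monomial (dd v) (cc v) := by
  unfold preM dd cc
  split_ifs with h1 h2 h3
  · rw [MvPolynomial.X]
  · simp
  · rw [MvPolynomial.monomial_zero']; simp
  · rw [MvPolynomial.monomial_zero']; simp

lemma monomial_prod {α : Type*} (s : Finset α) (d : α → ((ℤ × ℤ) →₀ ℕ)) (k : α → ℚ) :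
    (∏ a ∈ s, MvPolynomial.monomial (d a) (k a)) =
      MvPolynomial.monomial (∑ a ∈ s, d a) (∏ a ∈ s, k a) := by
  classical
  induction s using Finset.cons_induction with
  | empty => simp
  | cons a s ha ih =>
      rw [Finset.prod_cons, Finset.sum_cons, Finset.prod_cons, ih, MvPolynomial.monomial_mul]

lemma parity_of_lattice {x y : ℤ} (h : (3 * x + y) % 10 = 9) : (x + y) % 2 = 1 := by omega

lemma det_ne_zero (i₀ j₀ : ℤ) (m : ℕ) (f g : Fin m → ℤ) (D : Finset (Fin m))
    (hf : Function.Injective f) (hg : Function.Injective g)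
    (hvar : ∀ a ∈ D, (3 * (i₀ + f a) + (j₀ + g a)) % 10 = 9)
    (hconst : ∀ a ∉ D, ((i₀ + f a) + (j₀ + g a)) % 2 = 0)
    (hoff : ∀ a ∉ D, ∀ b ∉ D, a ≠ b → ((i₀ + f a) + (j₀ + g b)) % 2 = 1) :
    (Matrix.of fun a b : Fin m => preM (i₀ + f a, j₀ + g b)).det ≠ 0 := by
  classical
  set cell : Fin m → Fin m → ℤ × ℤ := fun a b => (i₀ + f a, j₀ + g b) with hcell
  have cell_inj : ∀ a b a' b', cell a b = cell a' b' → a = a' ∧ b = b' := by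
    intro a b a' b' h
    simp only [hcell, Prod.mk.injEq] at h
    exact ⟨hf (by omega), hg (by omega)⟩
  set μ : (ℤ × ℤ) →₀ ℕ := ∑ a ∈ D, Finsupp.single (cell a a) 1 with hμ
  -- the coefficient of μ in the determinant is nonzero
  have key : MvPolynomial.coeff μ
      (Matrix.of fun a b : Fin m => preM (i₀ + f a, j₀ + g b)).det
      = ∏ a : Fin m, cc (cell a a) := by
    rw [Matrix.det_apply']
    rw [MvPolynomial.coeff_sum]
    have hterm : ∀ σ : Equiv.Perm (Fin m),
        MvPolynomial.coeff μ
          (((Equiv.Perm.sign σ : ℤ) : Poly) * ∏ i, (Matrix.of fun a b : Fin m =>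
            preM (i₀ + f a, j₀ + g b)) (σ i) i)
        = ((Equiv.Perm.sign σ : ℤ) : ℚ) *
            (if (∑ i, dd (cell (σ i) i)) = μ then ∏ i, cc (cell (σ i) i) else 0) := by
      intro σ
      have : ((Equiv.Perm.sign σ : ℤ) : Poly) = MvPolynomial.C ((Equiv.Perm.sign σ : ℤ) : ℚ) := by
        simp
      rw [this, MvPolynomial.coeff_C_mul]
      congr 1
      have : ∀ i : Fin m, (Matrix.of fun a b : Fin m => preM (i₀ + f a, j₀ + g b)) (σ i) i
          = MvPolynomial.monomial (dd (cell (σ i) i)) (cc (cell (σ i) i)) := by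
        intro i; exact preM_eq_monomial _
      rw [Finset.prod_congr rfl (fun i _ => this i), monomial_prod,
        MvPolynomial.coeff_monomial]
    rw [Finset.sum_congr rfl (fun σ _ => hterm σ)]
    rw [Finset.sum_eq_single (1 : Equiv.Perm (Fin m))]
    · -- identity term
      have hsum : (∑ i, dd (cell ((1 : Equiv.Perm (Fin m)) i) i)) = μ := by
        simp only [Equiv.Perm.one_apply, hμ]
        rw [← Finset.sum_subset (Finset.subset_univ D)]
        · apply Finset.sum_congr rfl
          intro a ha
          unfold dd
          rw [if_pos (hvar a ha)]
        · intro a _ ha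
          unfold dd
          rw [if_neg]
          simp only [hcell]
          intro hlat
          have h1 := parity_of_lattice hlat
          have h2 := hconst a ha
          omega
      rw [if_pos hsum]
      simp
    · -- other permutations contribute 0
      intro σ _ hσ
      rcases Classical.em (∃ a ∈ D, σ a ≠ a) with ⟨a, haD, hane⟩ | hfix
      · -- some variable row moved: monomial misses μ
        have : (∑ i, dd (cell (σ i) i)) ≠ μ := by
          intro heq
          have h1 : (∑ i, dd (cell (σ i) i)) (cell a a) = 0 := by
            rw [Finsupp.finset_sum_apply]
            apply Finset.sum_eq_zero
            intro i _
            unfold dd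
            split_ifs with h
            · rw [Finsupp.single_apply]
              rw [if_neg]
              intro hc
              obtain ⟨h3, h4⟩ := cell_inj _ _ _ _ hc
              exact hane (by rw [h4] at h3; exact h3)
            · rfl
          have h2 : μ (cell a a) = 1 := by
            rw [hμ, Finsupp.finset_sum_apply]
            rw [Finset.sum_eq_single a]
            · rw [Finsupp.single_apply, if_pos rfl]
            · intro b _ hba
              rw [Finsupp.single_apply, if_neg]
              intro hc
              exact hba (cell_inj _ _ _ _ hc).1
            · intro h; exact absurd haD h
          rw [heq, h2] at h1
          exact one_ne_zero h1
        rw [if_neg this, mul_zero]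
      · -- σ fixes D, moves some b ∉ D
        push_neg at hfix
        have : ∃ b, σ b ≠ b := by
          by_contra hall
          push_neg at hall
          exact hσ (Equiv.ext fun x => hall x)
        obtain ⟨b, hb⟩ := this
        have hbD : b ∉ D := fun h => hb (hfix b h)
        have haD' : σ b ∉ D := by
          intro h
          have := hfix _ h
          exact hb (σ.injective (by rw [this]))
        have hne : σ b ≠ b := hb
        have hpar := hoff _ haD' _ hbD hne
        rcases Classical.em ((3 * (cell (σ b) b).1 + (cell (σ b) b).2) % 10 = 9) with hlat | hlat
        · -- variable off-diagonal: monomial ≠ μ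
          have : (∑ i, dd (cell (σ i) i)) ≠ μ := by
            intro heq
            have h1 : (∑ i, dd (cell (σ i) i)) (cell (σ b) b) ≠ 0 := by
              rw [Finsupp.finset_sum_apply]
              intro hz
              rw [Finset.sum_eq_zero_iff] at hz
              have := hz b (Finset.mem_univ b)
              unfold dd at this
              rw [if_pos hlat, Finsupp.single_apply, if_pos rfl] at this
              exact one_ne_zero this
            have h2 : μ (cell (σ b) b) = 0 := by
              rw [hμ, Finsupp.finset_sum_apply]
              apply Finset.sum_eq_zero
              intro a _
              rw [Finsupp.single_apply, if_neg]
              intro hc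
              obtain ⟨h3, h4⟩ := cell_inj _ _ _ _ hc
              rw [← h3, ← h4] at hne
              exact hne rfl
            rw [heq, h2] at h1
            exact h1 rfl
          rw [if_neg this, mul_zero]
        · -- zero entry: product of coefficients vanishes
          have hzero : cc (cell (σ b) b) = 0 := by
            unfold cc
            rw [if_neg hlat, if_pos hpar]
          split_ifs
          · rw [Finset.prod_eq_zero (Finset.mem_univ b) hzero, mul_zero]
          · rw [mul_zero]
    · intro h
      exact absurd (Finset.mem_univ _) h
  -- conclude
  intro hdet
  rw [hdet, MvPolynomial.coeff_zero] at key
  have : ∀ a : Fin m, cc (cell a a) ≠ 0 := by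
    intro a
    unfold cc
    split_ifs with h1 h2 h3
    · exact one_ne_zero
    · exact absurd (by
        rcases Classical.em (a ∈ D) with h | h
        · exact absurd (hvar a h) h1
        · have := hconst a h
          simp only [hcell] at h2
          omega) (fun h : False => h)
    · norm_num
    · exact one_ne_zero
  exact (Finset.prod_ne_zero_iff.mpr (fun a _ => this a)) key.symm


def okList (c n : ℕ) (L : List (ℕ × ℕ × Bool)) : Prop :=
  List.Pairwise (fun x y => x.1 ≠ y.1 ∧ x.2.1 ≠ y.2.1) L ∧
  (∀ x ∈ L, x.1 < n ∧ x.2.1 < n) ∧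
  (∀ x ∈ L, x.2.2 = true → (3 * x.1 + x.2.1) % 10 = c) ∧
  (∀ x ∈ L, x.2.2 = false → (x.1 + x.2.1) % 2 = (c + 1) % 2) ∧
  (∀ x ∈ L, ∀ y ∈ L, x.2.2 = false → y.2.2 = false → x.1 ≠ y.1 →
    (x.1 + y.2.1) % 2 = c % 2)

instance (c n : ℕ) (L : List (ℕ × ℕ × Bool)) : Decidable (okList c n L) := by
  unfold okList; infer_instance

def baseTable : ℕ → ℕ → List (ℕ × ℕ × Bool)
  | 0, 0 => []
  | 0, 1 => []
  | 0, 2 => []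
  | 0, 3 => []
  | 0, 4 => []
  | 0, 5 => []
  | 0, 6 => []
  | 0, 7 => []
  | 0, 8 => []
  | 0, 9 => []
  | 1, 0 => [(0, 0, true)]
  | 1, 1 => [(0, 0, false)]
  | 1, 2 => []
  | 1, 3 => [(0, 0, false)]
  | 1, 4 => []
  | 1, 5 => [(0, 0, false)]
  | 1, 6 => []
  | 1, 7 => [(0, 0, false)]
  | 1, 8 => []
  | 1, 9 => [(0, 0, false)]
  | 2, 0 => [(0, 0, true)]
  | 2, 1 => [(0, 1, true)]
  | 2, 2 => [(0, 1, false), (1, 0, false)]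
  | 2, 3 => [(1, 0, true)]
  | 2, 4 => [(1, 1, true)]
  | 2, 5 => [(0, 0, false), (1, 1, false)]
  | 2, 6 => [(0, 1, false), (1, 0, false)]
  | 2, 7 => [(0, 0, false), (1, 1, false)]
  | 2, 8 => [(0, 1, false), (1, 0, false)]
  | 2, 9 => [(0, 0, false), (1, 1, false)]
  | 3, 0 => [(0, 0, true), (1, 2, false), (2, 1, false)]
  | 3, 1 => [(0, 1, true), (2, 0, false)]
  | 3, 2 => [(0, 2, true), (1, 0, false), (2, 1, false)]
  | 3, 3 => [(1, 0, true), (0, 2, false)]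
  | 3, 4 => [(1, 1, true)]
  | 3, 5 => [(1, 2, true), (0, 0, false)]
  | 3, 6 => [(2, 0, true), (0, 1, false), (1, 2, false)]
  | 3, 7 => [(2, 1, true), (0, 0, false)]
  | 3, 8 => [(2, 2, true), (0, 1, false), (1, 0, false)]
  | 3, 9 => [(0, 0, false), (1, 1, false)]
  | 4, 0 => [(0, 0, true), (3, 1, true), (1, 2, false), (2, 3, false)]
  | 4, 1 => [(0, 1, true), (3, 2, true), (1, 3, false), (2, 0, false)]
  | 4, 2 => [(0, 2, true), (3, 3, true), (1, 0, false), (2, 1, false)]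
  | 4, 3 => [(0, 3, true), (1, 0, true), (2, 2, false), (3, 1, false)]
  | 4, 4 => [(1, 1, true), (0, 3, false), (3, 0, false)]
  | 4, 5 => [(1, 2, true), (0, 0, false), (3, 1, false)]
  | 4, 6 => [(1, 3, true), (2, 0, true), (0, 1, false), (3, 2, false)]
  | 4, 7 => [(2, 1, true), (0, 0, false), (1, 3, false)]
  | 4, 8 => [(2, 2, true), (0, 1, false), (1, 0, false)]
  | 4, 9 => [(2, 3, true), (3, 0, true), (0, 2, false), (1, 1, false)]
  | 5, 0 => [(0, 0, true), (2, 4, true), (3, 1, true), (1, 2, false), (4, 3, false)]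
  | 5, 1 => [(0, 1, true), (3, 2, true), (1, 3, false), (2, 0, false)]
  | 5, 2 => [(0, 2, true), (3, 3, true), (4, 0, true), (1, 4, false), (2, 1, false)]
  | 5, 3 => [(0, 3, true), (1, 0, true), (3, 4, true), (4, 1, true), (2, 2, false)]
  | 5, 4 => [(0, 4, true), (1, 1, true), (4, 2, true), (2, 3, false), (3, 0, false)]
  | 5, 5 => [(1, 2, true), (4, 3, true), (0, 0, false), (3, 1, false)]
  | 5, 6 => [(1, 3, true), (2, 0, true), (4, 4, true), (0, 1, false), (3, 2, false)]
  | 5, 7 => [(1, 4, true), (2, 1, true), (0, 0, false), (3, 3, false)]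
  | 5, 8 => [(2, 2, true), (0, 1, false), (1, 0, false)]
  | 5, 9 => [(2, 3, true), (3, 0, true), (0, 2, false), (1, 1, false)]
  | 6, 0 => [(0, 0, true), (2, 4, true), (3, 1, true), (5, 5, true), (1, 2, false), (4, 3, false)]
  | 6, 1 => [(0, 1, true), (2, 5, true), (3, 2, true), (1, 3, false), (4, 0, false)]
  | 6, 2 => [(0, 2, true), (3, 3, true), (4, 0, true), (1, 4, false), (2, 1, false)]
  | 6, 3 => [(0, 3, true), (1, 0, true), (3, 4, true), (4, 1, true), (2, 2, false), (5, 5, false)]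
  | 6, 4 => [(0, 4, true), (1, 1, true), (3, 5, true), (4, 2, true), (2, 3, false), (5, 0, false)]
  | 6, 5 => [(0, 5, true), (1, 2, true), (4, 3, true), (5, 0, true), (2, 4, false), (3, 1, false)]
  | 6, 6 => [(1, 3, true), (2, 0, true), (4, 4, true), (5, 1, true), (0, 5, false), (3, 2, false)]
  | 6, 7 => [(1, 4, true), (2, 1, true), (4, 5, true), (5, 2, true), (0, 0, false), (3, 3, false)]
  | 6, 8 => [(1, 5, true), (2, 2, true), (5, 3, true), (0, 1, false), (3, 0, false)]
  | 6, 9 => [(2, 3, true), (3, 0, true), (5, 4, true), (0, 2, false), (1, 1, false)]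
  | 7, 0 => [(0, 0, true), (2, 4, true), (3, 1, true), (5, 5, true), (6, 2, true), (1, 6, false), (4, 3, false)]
  | 7, 1 => [(0, 1, true), (2, 5, true), (3, 2, true), (5, 6, true), (6, 3, true), (4, 0, false)]
  | 7, 2 => [(0, 2, true), (2, 6, true), (3, 3, true), (4, 0, true), (6, 4, true)]
  | 7, 3 => [(0, 3, true), (1, 0, true), (3, 4, true), (4, 1, true), (6, 5, true), (2, 2, false)]
  | 7, 4 => [(0, 4, true), (1, 1, true), (3, 5, true), (4, 2, true), (6, 6, true), (2, 3, false), (5, 0, false)]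
  | 7, 5 => [(0, 5, true), (1, 2, true), (3, 6, true), (4, 3, true), (5, 0, true), (2, 4, false)]
  | 7, 6 => [(0, 6, true), (1, 3, true), (2, 0, true), (4, 4, true), (5, 1, true), (3, 2, false), (6, 5, false)]
  | 7, 7 => [(1, 4, true), (2, 1, true), (4, 5, true), (5, 2, true), (0, 0, false), (3, 3, false)]
  | 7, 8 => [(1, 5, true), (2, 2, true), (4, 6, true), (5, 3, true), (6, 0, true), (0, 1, false), (3, 4, false)]
  | 7, 9 => [(1, 6, true), (2, 3, true), (3, 0, true), (5, 4, true), (6, 1, true), (0, 2, false)]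
  | 8, 0 => [(0, 0, true), (1, 7, true), (2, 4, true), (3, 1, true), (5, 5, true), (6, 2, true), (4, 3, false), (7, 6, false)]
  | 8, 1 => [(0, 1, true), (2, 5, true), (3, 2, true), (5, 6, true), (6, 3, true), (7, 0, true), (1, 7, false), (4, 4, false)]
  | 8, 2 => [(0, 2, true), (2, 6, true), (3, 3, true), (4, 0, true), (5, 7, true), (6, 4, true), (7, 1, true)]
  | 8, 3 => [(0, 3, true), (1, 0, true), (2, 7, true), (3, 4, true), (4, 1, true), (6, 5, true), (7, 2, true)]
  | 8, 4 => [(0, 4, true), (1, 1, true), (3, 5, true), (4, 2, true), (6, 6, true), (7, 3, true), (2, 7, false), (5, 0, false)]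
  | 8, 5 => [(0, 5, true), (1, 2, true), (3, 6, true), (4, 3, true), (5, 0, true), (6, 7, true), (7, 4, true)]
  | 8, 6 => [(0, 6, true), (1, 3, true), (2, 0, true), (3, 7, true), (4, 4, true), (5, 1, true), (7, 5, true)]
  | 8, 7 => [(0, 7, true), (1, 4, true), (2, 1, true), (4, 5, true), (5, 2, true), (7, 6, true), (3, 3, false), (6, 0, false)]
  | 8, 8 => [(1, 5, true), (2, 2, true), (4, 6, true), (5, 3, true), (6, 0, true), (7, 7, true), (0, 1, false), (3, 4, false)]
  | 8, 9 => [(1, 6, true), (2, 3, true), (3, 0, true), (4, 7, true), (5, 4, true), (6, 1, true), (0, 2, false), (7, 5, false)]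
  | 9, 0 => [(0, 0, true), (1, 7, true), (2, 4, true), (3, 1, true), (4, 8, true), (5, 5, true), (6, 2, true), (8, 6, true)]
  | 9, 1 => [(0, 1, true), (1, 8, true), (2, 5, true), (3, 2, true), (5, 6, true), (6, 3, true), (7, 0, true), (8, 7, true), (4, 4, false)]
  | 9, 2 => [(0, 2, true), (2, 6, true), (3, 3, true), (4, 0, true), (5, 7, true), (6, 4, true), (7, 1, true), (8, 8, true)]
  | 9, 3 => [(0, 3, true), (1, 0, true), (2, 7, true), (3, 4, true), (4, 1, true), (5, 8, true), (6, 5, true), (7, 2, true), (8, 6, false)]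
  | 9, 4 => [(0, 4, true), (1, 1, true), (2, 8, true), (3, 5, true), (4, 2, true), (6, 6, true), (7, 3, true), (8, 0, true)]
  | 9, 5 => [(0, 5, true), (1, 2, true), (3, 6, true), (4, 3, true), (5, 0, true), (6, 7, true), (7, 4, true), (8, 1, true), (2, 8, false)]
  | 9, 6 => [(0, 6, true), (1, 3, true), (2, 0, true), (3, 7, true), (4, 4, true), (5, 1, true), (6, 8, true), (7, 5, true), (8, 2, true)]
  | 9, 7 => [(0, 7, true), (1, 4, true), (2, 1, true), (3, 8, true), (4, 5, true), (5, 2, true), (7, 6, true), (8, 3, true), (6, 0, false)]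
  | 9, 8 => [(0, 8, true), (1, 5, true), (2, 2, true), (4, 6, true), (5, 3, true), (6, 0, true), (7, 7, true), (8, 4, true)]
  | 9, 9 => [(1, 6, true), (2, 3, true), (3, 0, true), (4, 7, true), (5, 4, true), (6, 1, true), (7, 8, true), (8, 5, true), (0, 2, false)]
  | 10, 0 => [(0, 0, true), (1, 7, true), (2, 4, true), (3, 1, true), (4, 8, true), (5, 5, true), (6, 2, true), (7, 9, true), (8, 6, true), (9, 3, true)]
  | 10, 1 => [(0, 1, true), (1, 8, true), (2, 5, true), (3, 2, true), (4, 9, true), (5, 6, true), (6, 3, true), (7, 0, true), (8, 7, true), (9, 4, true)]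
  | 10, 2 => [(0, 2, true), (1, 9, true), (2, 6, true), (3, 3, true), (4, 0, true), (5, 7, true), (6, 4, true), (7, 1, true), (8, 8, true), (9, 5, true)]
  | 10, 3 => [(0, 3, true), (1, 0, true), (2, 7, true), (3, 4, true), (4, 1, true), (5, 8, true), (6, 5, true), (7, 2, true), (8, 9, true), (9, 6, true)]
  | 10, 4 => [(0, 4, true), (1, 1, true), (2, 8, true), (3, 5, true), (4, 2, true), (5, 9, true), (6, 6, true), (7, 3, true), (8, 0, true), (9, 7, true)]
  | 10, 5 => [(0, 5, true), (1, 2, true), (2, 9, true), (3, 6, true), (4, 3, true), (5, 0, true), (6, 7, true), (7, 4, true), (8, 1, true), (9, 8, true)]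
  | 10, 6 => [(0, 6, true), (1, 3, true), (2, 0, true), (3, 7, true), (4, 4, true), (5, 1, true), (6, 8, true), (7, 5, true), (8, 2, true), (9, 9, true)]
  | 10, 7 => [(0, 7, true), (1, 4, true), (2, 1, true), (3, 8, true), (4, 5, true), (5, 2, true), (6, 9, true), (7, 6, true), (8, 3, true), (9, 0, true)]
  | 10, 8 => [(0, 8, true), (1, 5, true), (2, 2, true), (3, 9, true), (4, 6, true), (5, 3, true), (6, 0, true), (7, 7, true), (8, 4, true), (9, 1, true)]
  | 10, 9 => [(0, 9, true), (1, 6, true), (2, 3, true), (3, 0, true), (4, 7, true), (5, 4, true), (6, 1, true), (7, 8, true), (8, 5, true), (9, 2, true)]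
  | 11, 0 => [(0, 0, true), (10, 10, true), (1, 7, true), (2, 4, true), (3, 1, true), (4, 8, true), (5, 5, true), (6, 2, true), (7, 9, true), (8, 6, true), (9, 3, true)]
  | 11, 1 => [(0, 1, true), (1, 8, true), (2, 5, true), (3, 2, true), (4, 9, true), (5, 6, true), (6, 3, true), (7, 0, true), (8, 7, true), (9, 4, true), (10, 10, false)]
  | 11, 2 => [(0, 2, true), (1, 9, true), (2, 6, true), (3, 3, true), (4, 0, true), (5, 7, true), (6, 4, true), (7, 1, true), (8, 8, true), (9, 5, true)]
  | 11, 3 => [(0, 3, true), (1, 0, true), (2, 7, true), (3, 4, true), (4, 1, true), (5, 8, true), (6, 5, true), (7, 2, true), (8, 9, true), (9, 6, true), (10, 10, false)]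
  | 11, 4 => [(0, 4, true), (1, 1, true), (2, 8, true), (3, 5, true), (4, 2, true), (5, 9, true), (6, 6, true), (7, 3, true), (8, 0, true), (9, 7, true)]
  | 11, 5 => [(0, 5, true), (1, 2, true), (2, 9, true), (3, 6, true), (4, 3, true), (5, 0, true), (6, 7, true), (7, 4, true), (8, 1, true), (9, 8, true), (10, 10, false)]
  | 11, 6 => [(0, 6, true), (1, 3, true), (2, 0, true), (3, 7, true), (4, 4, true), (5, 1, true), (6, 8, true), (7, 5, true), (8, 2, true), (9, 9, true)]
  | 11, 7 => [(0, 7, true), (1, 4, true), (2, 1, true), (3, 8, true), (4, 5, true), (5, 2, true), (6, 9, true), (7, 6, true), (8, 3, true), (9, 0, true), (10, 10, false)]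
  | 11, 8 => [(0, 8, true), (1, 5, true), (2, 2, true), (3, 9, true), (4, 6, true), (5, 3, true), (6, 0, true), (7, 7, true), (8, 4, true), (9, 1, true)]
  | 11, 9 => [(0, 9, true), (1, 6, true), (2, 3, true), (3, 0, true), (4, 7, true), (5, 4, true), (6, 1, true), (7, 8, true), (8, 5, true), (9, 2, true), (10, 10, false)]
  | 12, 0 => [(0, 0, true), (10, 10, true), (1, 7, true), (2, 4, true), (3, 1, true), (4, 8, true), (5, 5, true), (6, 2, true), (7, 9, true), (8, 6, true), (9, 3, true)]
  | 12, 1 => [(0, 1, true), (10, 11, true), (1, 8, true), (2, 5, true), (3, 2, true), (4, 9, true), (5, 6, true), (6, 3, true), (7, 0, true), (8, 7, true), (9, 4, true)]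
  | 12, 2 => [(0, 2, true), (1, 9, true), (2, 6, true), (3, 3, true), (4, 0, true), (5, 7, true), (6, 4, true), (7, 1, true), (8, 8, true), (9, 5, true), (10, 11, false), (11, 10, false)]
  | 12, 3 => [(0, 3, true), (1, 0, true), (11, 10, true), (2, 7, true), (3, 4, true), (4, 1, true), (5, 8, true), (6, 5, true), (7, 2, true), (8, 9, true), (9, 6, true)]
  | 12, 4 => [(0, 4, true), (1, 1, true), (11, 11, true), (2, 8, true), (3, 5, true), (4, 2, true), (5, 9, true), (6, 6, true), (7, 3, true), (8, 0, true), (9, 7, true)]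
  | 12, 5 => [(0, 5, true), (1, 2, true), (2, 9, true), (3, 6, true), (4, 3, true), (5, 0, true), (6, 7, true), (7, 4, true), (8, 1, true), (9, 8, true), (10, 10, false), (11, 11, false)]
  | 12, 6 => [(0, 6, true), (1, 3, true), (2, 0, true), (3, 7, true), (4, 4, true), (5, 1, true), (6, 8, true), (7, 5, true), (8, 2, true), (9, 9, true), (10, 11, false), (11, 10, false)]
  | 12, 7 => [(0, 7, true), (1, 4, true), (2, 1, true), (3, 8, true), (4, 5, true), (5, 2, true), (6, 9, true), (7, 6, true), (8, 3, true), (9, 0, true), (10, 10, false), (11, 11, false)]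
  | 12, 8 => [(0, 8, true), (1, 5, true), (2, 2, true), (3, 9, true), (4, 6, true), (5, 3, true), (6, 0, true), (7, 7, true), (8, 4, true), (9, 1, true), (10, 11, false), (11, 10, false)]
  | 12, 9 => [(0, 9, true), (1, 6, true), (2, 3, true), (3, 0, true), (4, 7, true), (5, 4, true), (6, 1, true), (7, 8, true), (8, 5, true), (9, 2, true), (10, 10, false), (11, 11, false)]
  | _, _ => []

lemma base_ok : ∀ n < 13, ∀ c < 10,
    okList c n (baseTable n c) ∧ n ≤ (baseTable n c).length + 2 := by decide

lemma exists_ok (c : ℕ) (hc : c < 10) :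
    ∀ n, ∃ L, okList c n L ∧ n ≤ L.length + 2 := by
  intro n
  induction n using Nat.strong_induction_on with
  | _ n ih =>
    by_cases hn : n < 13
    · exact ⟨baseTable n c, base_ok n hn c hc⟩
    · push_neg at hn
      obtain ⟨L, hL, hlen⟩ := ih (n - 10) (by omega)
      have hnewL : True := trivial
      set newL : List (ℕ × ℕ × Bool) :=
        (List.range 10).map (fun t =>
          (n - 10 + t, n - 10 + (c + 10 - (3 * (n - 10 + t) + (n - 10)) % 10) % 10, true))
        with hnewL2
      refine ⟨L ++ newL, ⟨?_, ?_, ?_, ?_, ?_⟩, ?_⟩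
      · rw [List.pairwise_append]
        obtain ⟨h1, h2, _⟩ := hL
        refine ⟨h1, ?_, ?_⟩
        · -- pairwise on newL
          rw [hnewL2, List.pairwise_map, List.pairwise_iff_getElem]
          intro i j hi hj hij
          rw [List.length_range] at hi hj
          simp only [List.getElem_range]
          omega
        · intro x hx y hy
          have hxb := (h2 x hx).1
          have hxc := (h2 x hx).2
          rw [hnewL2, List.mem_map] at hy
          obtain ⟨t, ht, rfl⟩ := hy
          rw [List.mem_range] at ht
          dsimp only
          omega
      · intro x hx
        rw [List.mem_append] at hx
        rcases hx with hx | hx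
        · have := hL.2.1 x hx; omega
        · rw [hnewL2, List.mem_map] at hx
          obtain ⟨t, ht, rfl⟩ := hx
          rw [List.mem_range] at ht
          dsimp only
          omega
      · intro x hx hxv
        rw [List.mem_append] at hx
        rcases hx with hx | hx
        · exact hL.2.2.1 x hx hxv
        · rw [hnewL2, List.mem_map] at hx
          obtain ⟨t, ht, rfl⟩ := hx
          rw [List.mem_range] at ht
          dsimp only
          omega
      · intro x hx hxv
        rw [List.mem_append] at hx
        rcases hx with hx | hx
        · exact hL.2.2.2.1 x hx hxv
        · rw [hnewL2, List.mem_map] at hx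
          obtain ⟨t, ht, rfl⟩ := hx
          simp at hxv
      · intro x hx y hy hxv hyv hxy
        rw [List.mem_append] at hx hy
        rcases hx with hx | hx
        · rcases hy with hy | hy
          · exact hL.2.2.2.2 x hx y hy hxv hyv hxy
          · rw [hnewL2, List.mem_map] at hy
            obtain ⟨t, ht, rfl⟩ := hy
            simp at hyv
        · rw [hnewL2, List.mem_map] at hx
          obtain ⟨t, ht, rfl⟩ := hx
          simp at hxv
      · rw [List.length_append, hnewL2, List.length_map, List.length_range]
        omega


lemma rank_submatrix_le' {p q m : ℕ} (A : Matrix (Fin p) (Fin q) K)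
    (f : Fin m → Fin p) (g : Fin m → Fin q) :
    (A.submatrix f g).rank ≤ A.rank := by
  have h : A.submatrix f g =
      ((1 : Matrix (Fin p) (Fin p) K).submatrix f _root_.id) *
        (A * ((1 : Matrix (Fin q) (Fin q) K).submatrix _root_.id g)) := by
    ext a b
    simp [Matrix.mul_apply, Matrix.one_apply, Finset.sum_ite_eq, mul_ite, ite_mul,
      Finset.sum_ite_eq']
  rw [h]
  exact le_trans (Matrix.rank_mul_le_right _ _) (Matrix.rank_mul_le_left _ _)


end MexKAux

open MexKAux in
theorem MexK_block_rank_deficiency_le_two (i₀ j₀ : ℤ) (p q : ℕ) (hp : 0 < p) (hq : 0 < q) :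
    min p q - 2 ≤
      (Matrix.of fun (r : Fin p) (s : Fin q) =>
        MexK (i₀ + ((r : ℕ) : ℤ), j₀ + ((s : ℕ) : ℤ))).rank := by
  classical
  set A : Matrix (Fin p) (Fin q) K :=
    Matrix.of fun (r : Fin p) (s : Fin q) =>
      MexK (i₀ + ((r : ℕ) : ℤ), j₀ + ((s : ℕ) : ℤ)) with hA
  set n : ℕ := min p q with hn
  set z : ℤ := 3 * i₀ + j₀ with hz
  set c : ℕ := ((9 - z) % 10).toNat with hc'
  have hcz : (c : ℤ) = (9 - z) % 10 := by
    rw [hc']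
    exact Int.toNat_of_nonneg (Int.emod_nonneg _ (by norm_num))
  have hc : c < 10 := by
    have h1 : (9 - z) % 10 < 10 := Int.emod_lt_of_pos _ (by norm_num)
    omega
  obtain ⟨L, hok, hlen⟩ := exists_ok c hc n
  set m : ℕ := L.length with hm
  set f : Fin m → ℤ := fun a => ((L.get a).1 : ℤ) with hf'
  set g : Fin m → ℤ := fun a => ((L.get a).2.1 : ℤ) with hg'
  set D : Finset (Fin m) := Finset.univ.filter (fun a => (L.get a).2.2 = true) with hD
  obtain ⟨hpw, hbound, hvarL, hconstL, hoffL⟩ := hok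
  have hget : ∀ a : Fin m, L.get a ∈ L := fun a => by
    have := List.get_mem L a
    simpa using this
  have hdistinct : ∀ a b : Fin m, a ≠ b →
      (L.get a).1 ≠ (L.get b).1 ∧ (L.get a).2.1 ≠ (L.get b).2.1 := by
    intro a b hab
    rw [List.pairwise_iff_getElem] at hpw
    rcases lt_or_gt_of_ne (fun h => hab (Fin.ext h) : (a : ℕ) ≠ (b : ℕ)) with h | h
    · exact hpw a b a.isLt b.isLt h
    · have := hpw b a b.isLt a.isLt h
      exact ⟨this.1.symm, this.2.symm⟩
  have hfinj : Function.Injective f := by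
    intro a b hab
    by_contra hne
    exact (hdistinct a b hne).1 (by simpa [hf'] using hab)
  have hginj : Function.Injective g := by
    intro a b hab
    by_contra hne
    exact (hdistinct a b hne).2 (by simpa [hg'] using hab)
  have hvar : ∀ a ∈ D, (3 * (i₀ + f a) + (j₀ + g a)) % 10 = 9 := by
    intro a ha
    rw [hD, Finset.mem_filter] at ha
    have h1 := hvarL _ (hget a) ha.2
    simp only [hf', hg']
    omega
  have hconst : ∀ a ∉ D, ((i₀ + f a) + (j₀ + g a)) % 2 = 0 := by
    intro a ha
    rw [hD, Finset.mem_filter] at ha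
    have hfalse : (L.get a).2.2 = false := by
      rcases Bool.eq_false_or_eq_true (L.get a).2.2 with h | h
      · exact absurd ⟨Finset.mem_univ a, h⟩ ha
      · exact h
    have h1 := hconstL _ (hget a) hfalse
    simp only [hf', hg']
    omega
  have hoff : ∀ a ∉ D, ∀ b ∉ D, a ≠ b → ((i₀ + f a) + (j₀ + g b)) % 2 = 1 := by
    intro a ha b hb hab
    rw [hD, Finset.mem_filter] at ha hb
    have hfa : (L.get a).2.2 = false := by
      rcases Bool.eq_false_or_eq_true (L.get a).2.2 with h | h
      · exact absurd ⟨Finset.mem_univ a, h⟩ ha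
      · exact h
    have hfb : (L.get b).2.2 = false := by
      rcases Bool.eq_false_or_eq_true (L.get b).2.2 with h | h
      · exact absurd ⟨Finset.mem_univ b, h⟩ hb
      · exact h
    have h1 := hoffL _ (hget a) _ (hget b) hfa hfb (hdistinct a b hab).1
    simp only [hf', hg']
    omega
  have hdet := det_ne_zero i₀ j₀ m f g D hfinj hginj hvar hconst hoff
  -- the submatrix of A
  have hnp : n ≤ p := min_le_left _ _
  have hnq : n ≤ q := min_le_right _ _
  set f' : Fin m → Fin p := fun a => ⟨(L.get a).1, lt_of_lt_of_le (hbound _ (hget a)).1 hnp⟩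
    with hf''
  set g' : Fin m → Fin q := fun a => ⟨(L.get a).2.1, lt_of_lt_of_le (hbound _ (hget a)).2 hnq⟩
    with hg''
  set N : Matrix (Fin m) (Fin m) Poly :=
    Matrix.of fun a b : Fin m => preM (i₀ + f a, j₀ + g b) with hN
  have hsub : A.submatrix f' g' = (algebraMap Poly K).mapMatrix N := by
    ext a b
    simp only [Matrix.submatrix_apply, RingHom.mapMatrix_apply, Matrix.map_apply, hA, hN,
      Matrix.of_apply, hf'', hg'', hf', hg', MexK_eq]
  have hdet2 : (A.submatrix f' g').det ≠ 0 := by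
    rw [hsub, ← RingHom.map_det]
    intro h
    exact hdet (IsFractionRing.injective Poly K (by rw [h, map_zero]))
  have hunit : IsUnit (A.submatrix f' g') := by
    rw [Matrix.isUnit_iff_isUnit_det]
    exact isUnit_iff_ne_zero.mpr hdet2
  have hrank : (A.submatrix f' g').rank = m := by
    rw [Matrix.rank_of_isUnit _ hunit, Fintype.card_fin]
  have hle := rank_submatrix_le' A f' g'
  omega
end

section
/- Let p, q, r, s be integers greater than 1 with ps − qr = 1; set N = pqrs, α = qr − 1, β = ps − 1. Define M : ℤ × ℤ → ℤ/Nℤ to be 4-periodic in both indices with fundamental 4×4 block (rows listed top to bottom, entries taken mod N): (p, q, −p, −q), (r, s, −r, −s), (αp, βq, p, q), (βr, αs, r, s); that is, M(i,j) is the block entry in row i mod 4 and column j mod 4. Then M is an SL2-tiling over ℤ/Nℤ: for all i, j ∈ ℤ, M(i,j)·M(i+1,j+1) − M(i,j+1)·M(i+1,j) = 1 in ℤ/Nℤ. -/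
/-- The fundamental 4×4 block with rows
`(p, q, -p, -q)`, `(r, s, -r, -s)`, `(αp, βq, p, q)`, `(βr, αs, r, s)`,
where `α = qr - 1` and `β = ps - 1`. -/
def blockM (p q r s : ℤ) : Fin 4 → Fin 4 → ℤ :=
  ![![p, q, -p, -q],
    ![r, s, -r, -s],
    ![(q * r - 1) * p, (p * s - 1) * q, p, q],
    ![(p * s - 1) * r, (q * r - 1) * s, r, s]]

/-- The doubly 4-periodic tiling over `ZMod N` with fundamental block `blockM p q r s`. -/
def Mpqrs (p q r s : ℤ) (N : ℕ) : ℤ × ℤ → ZMod N := fun ij =>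
  ((blockM p q r s (Fin.ofNat 4 (ij.1 % 4).toNat) (Fin.ofNat 4 (ij.2 % 4).toNat) : ℤ) : ZMod N)

lemma fin4_mk_two (h : (2:ℕ) < 4) : (⟨2, h⟩ : Fin 4) = 2 := rfl
lemma fin4_mk_three (h : (3:ℕ) < 4) : (⟨3, h⟩ : Fin 4) = 3 := rfl

lemma blockM_det (p q r s : ℤ) (N : ℕ)
    (hd : (p : ZMod N) * s - (q : ZMod N) * r = 1)
    (h0 : (p : ZMod N) * q * r * s = 0) (a b : Fin 4) :
    ((blockM p q r s a b : ℤ) : ZMod N) * ((blockM p q r s (a + 1) (b + 1) : ℤ) : ZMod N) -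
      ((blockM p q r s a (b + 1) : ℤ) : ZMod N) * ((blockM p q r s (a + 1) b : ℤ) : ZMod N)
      = 1 := by
  fin_cases a <;> fin_cases b <;>
    norm_num [blockM, Fin.mk_zero, Fin.mk_one, fin4_mk_two, fin4_mk_three,
      show ((0 : Fin 4) + 1 = 1) from rfl,
      show ((1 : Fin 4) + 1 = 2) from rfl, show ((2 : Fin 4) + 1 = 3) from rfl,
      show ((3 : Fin 4) + 1 = 0) from rfl] <;>
    push_cast <;>
    first
      | linear_combination hd
      | linear_combination hd + h0
      | linear_combination hd - h0
      | linear_combination hd - ((p : ZMod N) * s - (q : ZMod N) * r) * h0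

theorem Mpqrs_isSL2Tiling (p q r s : ℤ) (hp : 1 < p) (hq : 1 < q) (hr : 1 < r) (hs : 1 < s)
    (hdet : p * s - q * r = 1) (N : ℕ) (hN : (N : ℤ) = p * q * r * s) :
    IsSL2Tiling (Mpqrs p q r s N) := by
  have hd : (p : ZMod N) * s - (q : ZMod N) * r = 1 := by
    have := congrArg (Int.cast : ℤ → ZMod N) hdet
    push_cast at this
    exact this
  have h0 : (p : ZMod N) * q * r * s = 0 := by
    have := congrArg (Int.cast : ℤ → ZMod N) hN
    push_cast at this
    rw [ZMod.natCast_self] at this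
    exact this.symm
  intro i j
  have key : ∀ k : ℤ, Fin.ofNat 4 ((k + 1) % 4).toNat = Fin.ofNat 4 (k % 4).toNat + 1 := by
    intro k
    have hk : k % 4 = 0 ∨ k % 4 = 1 ∨ k % 4 = 2 ∨ k % 4 = 3 := by omega
    have hk' : (k + 1) % 4 = (k % 4 + 1) % 4 := by omega
    rcases hk with h | h | h | h <;> rw [hk', h] <;> rfl
  have := blockM_det p q r s N hd h0 (Fin.ofNat 4 (i % 4).toNat) (Fin.ofNat 4 (j % 4).toNat)
  simpa only [Mpqrs, key i, key j] using this
end
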